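/- arXiv:1007.3964 — 3 statements merged into one kernel-verified Lean document; each statement's English description precedes it below -/
import Mathlib

section
/- Let T be a binary phylogenetic X-tree with |X| ≥ 3, let f be a character on X that is homoplasy-free on T, and let k ∈ X. Then l_{T|_{X∖{k}}}(f|_{X∖{k}}) = l_T(f) if the state f(k) is also taken by some taxon in X∖{k} (i.e. f(k) ∈ f(X∖{k})), and l_{T|_{X∖{k}}}(f|_{X∖{k}}) = l_T(f) − 1 otherwise. -/
/-!
Basic definitions for Maximum Parsimony / Maximum Likelihood phylogenetics.

A *binary phylogenetic X-tree* is a finite simple graph that is a tree (connected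
and acyclic) whose degree-1 vertices are exactly the (images of the) taxa in `X`,
all other vertices having degree 3.
-/

/-- The number of edges of the graph `G` on which the vertex labeling `g` changes state
(i.e. edges `{u,v}` with `g u ≠ g v`). -/
noncomputable def changedEdges {V C : Type} (G : SimpleGraph V) (g : V → C) : ℕ :=
  {e ∈ G.edgeSet | ¬ (Sym2.map g e).IsDiag}.ncard

/-- The parsimony score of a character `f : X → C` on the graph `G`, whose taxa are
embedded via `ι : X → V`: the minimum number of change-edges over all extensions
`g : V → C` of `f`. -/
noncomputable def gScore {V X C : Type} (G : SimpleGraph V) (ι : X → V) (f : X → C) : ℕ :=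
  sInf { n : ℕ | ∃ g : V → C, (∀ x, g (ι x) = f x) ∧ n = changedEdges G g }

/-- The parsimony score of an alignment (finite sequence of characters). -/
noncomputable def gScoreA {V X C : Type} (G : SimpleGraph V) (ι : X → V)
    (S : List (X → C)) : ℕ :=
  (S.map (gScore G ι)).sum

/-- A binary phylogenetic `X`-tree: a finite simple graph which is a tree (connected and
acyclic), with an injective embedding `ι` of the taxon set `X` as its vertices of degree 1,
every vertex not in the image of `ι` having degree 3. -/
structure PhyloTree (X : Type) : Type 1 where
  V : Type
  G : SimpleGraph V
  ι : X → V
  finV : Finite V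
  inj : Function.Injective ι
  conn : G.Connected
  acyc : G.IsAcyclic
  leafDeg : ∀ x : X, (G.neighborSet (ι x)).ncard = 1
  innerDeg : ∀ v : V, v ∉ Set.range ι → (G.neighborSet v).ncard = 3

namespace PhyloTree

variable {X C : Type}

/-- Parsimony score `l_T(f)` of a character on a binary phylogenetic tree. -/
noncomputable def score (T : PhyloTree X) (f : X → C) : ℕ := gScore T.G T.ι f

/-- Parsimony score `l_T(S)` of an alignment on a binary phylogenetic tree. -/
noncomputable def scoreA (T : PhyloTree X) (S : List (X → C)) : ℕ := gScoreA T.G T.ι S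

/-- The set of vertices of `T` lying on a path between two taxa of `Y`. -/
def span (T : PhyloTree X) (Y : Set X) : Set T.V :=
  {v | ∃ x ∈ Y, ∃ y ∈ Y, ∃ p : T.G.Walk (T.ι x) (T.ι y), p.IsPath ∧ v ∈ p.support}

lemma ι_mem_span (T : PhyloTree X) {Y : Set X} {y : X} (hy : y ∈ Y) : T.ι y ∈ T.span Y :=
  ⟨y, hy, y, hy, SimpleGraph.Walk.nil, SimpleGraph.Walk.IsPath.nil,
    SimpleGraph.Walk.start_mem_support _⟩

/-- Parsimony score of the restricted character `f|_Y` on the restricted tree `T|_Y`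
(the subgraph of `T` induced on the set of vertices lying on paths between taxa of `Y`). -/
noncomputable def restScore (T : PhyloTree X) (Y : Set X) (f : X → C) : ℕ :=
  gScore (T.G.induce (T.span Y)) (fun y : Y => ⟨T.ι y, T.ι_mem_span y.2⟩) (fun y : Y => f y)

/-- Parsimony score of the restricted alignment `S|_Y` on the restricted tree `T|_Y`. -/
noncomputable def restScoreA (T : PhyloTree X) (Y : Set X) (S : List (X → C)) : ℕ :=
  (S.map (T.restScore Y)).sum

end PhyloTree

/-- The restriction `S|_Y` of an alignment to a subset `Y` of the taxa. -/
def subAl {X C : Type} (Y : Set X) (S : List (X → C)) : List (↥Y → C) :=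
  S.map fun f y => f y.1

/-- Two binary phylogenetic `X`-trees are isomorphic as `X`-trees if there is a graph
isomorphism between them fixing every taxon. -/
def PhyloIso {X : Type} (T T' : PhyloTree X) : Prop :=
  ∃ e : T.G ≃g T'.G, ∀ x, e (T.ι x) = T'.ι x

/-- `T` is a maximum parsimony (MP) tree for the alignment `S`. -/
def PhyloTree.IsMP {X C : Type} (T : PhyloTree X) (S : List (X → C)) : Prop :=
  ∀ T' : PhyloTree X, T.scoreA S ≤ T'.scoreA S

/-- `T` is the unique maximum parsimony tree for `S`: it is an MP tree and every tree not
isomorphic to it (fixing the taxa) has strictly larger parsimony score. -/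
def PhyloTree.IsUniqueMP {X C : Type} (T : PhyloTree X) (S : List (X → C)) : Prop :=
  T.IsMP S ∧ ∀ T' : PhyloTree X, ¬ PhyloIso T T' → T.scoreA S < T'.scoreA S

/-- The caterpillar tree `((i,j),k,(l,m))` on five taxa: there are internal vertices
`a, c, b` with edges `{i,a},{j,a},{a,c},{k,c},{c,b},{l,b},{m,b}`. -/
def PhyloTree.Cat5 (T : PhyloTree (Fin 5)) (i j k l m : Fin 5) : Prop :=
  ∃ a c b : T.V, T.G.Adj (T.ι i) a ∧ T.G.Adj (T.ι j) a ∧ T.G.Adj a c ∧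
    T.G.Adj (T.ι k) c ∧ T.G.Adj c b ∧ T.G.Adj (T.ι l) b ∧ T.G.Adj (T.ι m) b

/-- The caterpillar tree `(((i,j),k),(l,(m,n)))` on six taxa: internal vertices `a,b,c,d`
with edges `{i,a},{j,a},{a,b},{k,b},{b,c},{l,c},{c,d},{m,d},{n,d}`. -/
def PhyloTree.Cat6 (T : PhyloTree (Fin 6)) (i j k l m n : Fin 6) : Prop :=
  ∃ a b c d : T.V, T.G.Adj (T.ι i) a ∧ T.G.Adj (T.ι j) a ∧ T.G.Adj a b ∧
    T.G.Adj (T.ι k) b ∧ T.G.Adj b c ∧ T.G.Adj (T.ι l) c ∧ T.G.Adj c d ∧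
    T.G.Adj (T.ι m) d ∧ T.G.Adj (T.ι n) d

/-- The quartet tree `((x₁,x₂),(x₃,x₄))`: internal vertices `u,v` with edges
`{x₁,u},{x₂,u},{u,v},{x₃,v},{x₄,v}`. -/
def PhyloTree.Cherries {X : Type} (T : PhyloTree X) (x₁ x₂ x₃ x₄ : X) : Prop :=
  ∃ u v : T.V, T.G.Adj (T.ι x₁) u ∧ T.G.Adj (T.ι x₂) u ∧ T.G.Adj u v ∧
    T.G.Adj (T.ι x₃) v ∧ T.G.Adj (T.ι x₄) v

/-- The tree `T` displays the quartet split `x₁x₂ | x₃x₄`: the path from `x₁` to `x₂`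
is vertex-disjoint from the path from `x₃` to `x₄`. (For a quartet tree on the four
taxa `x₁,…,x₄` this says exactly that its cherries are `{x₁,x₂}` and `{x₃,x₄}`;
for a larger tree it says that the restriction of `T` to `{x₁,x₂,x₃,x₄}`, with
degree-2 vertices suppressed, is the quartet tree `((x₁,x₂),(x₃,x₄))`.) -/
def PhyloTree.Split {X : Type} (T : PhyloTree X) (x₁ x₂ x₃ x₄ : X) : Prop :=
  ∃ (p : T.G.Walk (T.ι x₁) (T.ι x₂)) (q : T.G.Walk (T.ι x₃) (T.ι x₄)),
    p.IsPath ∧ q.IsPath ∧ ∀ v, v ∈ p.support → v ∉ q.support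

/-- A quartet tree `Q` on a four-element subset `Y ⊆ X` is compatible with the
`X`-tree `T` if the partition of `Y` into the two cherries of `Q` agrees with the
quartet split displayed by `T` on `Y`. -/
def QuartetCompat {X : Type} {Y : Set X} (Q : PhyloTree ↥Y) (T : PhyloTree X) : Prop :=
  ∃ y₁ y₂ y₃ y₄ : ↥Y, y₁ ≠ y₂ ∧ y₁ ≠ y₃ ∧ y₁ ≠ y₄ ∧ y₂ ≠ y₃ ∧ y₂ ≠ y₄ ∧ y₃ ≠ y₄ ∧
    ({y₁, y₂, y₃, y₄} : Set ↥Y) = Set.univ ∧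
    Q.Cherries y₁ y₂ y₃ y₄ ∧ T.Split y₁.1 y₂.1 y₃.1 y₄.1

/-- The binary phylogenetic `Y`-tree `Q` is (up to isomorphism) the tree `T‖_Y` obtained
from `T|_Y` by suppressing its degree-2 vertices: equivalently (binary trees being
determined by their quartet splits), `Q` displays exactly the quartet splits of `T`
on taxa from `Y`. -/
def DisplaysRestriction {X : Type} (Y : Set X) (Q : PhyloTree ↥Y) (T : PhyloTree X) : Prop :=
  ∀ y₁ y₂ y₃ y₄ : ↥Y, (Q.Split y₁ y₂ y₃ y₄ ↔ T.Split y₁.1 y₂.1 y₃.1 y₄.1)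

/-- The likelihood `P(f | G, p)` of a character `f` under the fully symmetric `N_r`-model
on the graph `G` (taxa embedded via `ι`) with substitution probabilities `p` on the edges:
`(1/r) · Σ_g Π_{e ∈ E(G)} w_e(g)`, summed over all extensions `g` of `f`, where
`w_e(g) = p e` if `g` changes state along `e` and `w_e(g) = 1 - (r-1) p e` otherwise. -/
noncomputable def charLik {V X C : Type} [DecidableEq C] (r : ℕ) (G : SimpleGraph V)
    (ι : X → V) (f : X → C) (p : Sym2 V → ℝ) : ℝ :=
  (1 / (r : ℝ)) * ∑ᶠ g ∈ {g : V → C | ∀ x, g (ι x) = f x},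
    ∏ᶠ e ∈ G.edgeSet, (if (Sym2.map g e).IsDiag then 1 - ((r : ℝ) - 1) * p e else p e)

/-- `max P(f|T)`: the supremum of the likelihood of the character `f` on the binary
phylogenetic tree `T` under the `N_r`-model, over all edge parameters `0 ≤ p e ≤ 1/r`. -/
noncomputable def PhyloTree.maxLik {X C : Type} [DecidableEq C] (T : PhyloTree X) (r : ℕ)
    (f : X → C) : ℝ :=
  sSup { L : ℝ | ∃ p : Sym2 T.V → ℝ,
    (∀ e ∈ T.G.edgeSet, 0 ≤ p e ∧ p e ≤ 1 / (r : ℝ)) ∧ L = charLik r T.G T.ι f p }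

/-- `max P(S|T)` under the `N_r`-model with *no common mechanism*: the product over the
characters of the alignment of their individually maximized likelihoods. -/
noncomputable def PhyloTree.maxLikA {X C : Type} [DecidableEq C] (T : PhyloTree X) (r : ℕ)
    (S : List (X → C)) : ℝ :=
  (S.map (T.maxLik r)).prod

/-- `T` is a maximum likelihood (ML) tree for `S` under the `N_r`-model with no common
mechanism. -/
def PhyloTree.IsML {X C : Type} [DecidableEq C] (T : PhyloTree X) (r : ℕ)
    (S : List (X → C)) : Prop :=
  ∀ T' : PhyloTree X, T'.maxLikA r S ≤ T.maxLikA r S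

/-- `T` is the unique ML tree for `S` under the `N_r`-model with no common mechanism. -/
def PhyloTree.IsUniqueML {X C : Type} [DecidableEq C] (T : PhyloTree X) (r : ℕ)
    (S : List (X → C)) : Prop :=
  T.IsML r S ∧ ∀ T' : PhyloTree X, ¬ PhyloIso T T' → T'.maxLikA r S < T.maxLikA r S
section AuxGraph
open SimpleGraph
variable {W C : Type}

/-- The set of change-edges. -/
def chgSet (H : SimpleGraph W) (g : W → C) : Set (Sym2 W) :=
  {e ∈ H.edgeSet | ¬ (Sym2.map g e).IsDiag}

lemma changedEdges_eq (H : SimpleGraph W) (g : W → C) :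
    changedEdges H g = (chgSet H g).ncard := rfl

lemma mem_chgSet_iff {H : SimpleGraph W} {g : W → C} {u v : W} :
    s(u, v) ∈ chgSet H g ↔ H.Adj u v ∧ g u ≠ g v := by
  simp [chgSet, Sym2.map_pair_eq, Sym2.mk_isDiag_iff, SimpleGraph.mem_edgeSet]

lemma adj_del_chg {H : SimpleGraph W} {g : W → C} {u v : W} (h : H.Adj u v)
    (hg : g u = g v) : (H.deleteEdges (chgSet H g)).Adj u v := by
  rw [SimpleGraph.deleteEdges_adj]
  exact ⟨h, fun hc => (mem_chgSet_iff.1 hc).2 hg⟩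

lemma del_chg_adj {H : SimpleGraph W} {g : W → C} {u v : W}
    (h : (H.deleteEdges (chgSet H g)).Adj u v) : H.Adj u v ∧ g u = g v := by
  rw [SimpleGraph.deleteEdges_adj] at h
  refine ⟨h.1, ?_⟩
  by_contra hne
  exact h.2 (mem_chgSet_iff.2 ⟨h.1, hne⟩)

lemma const_of_del_walk {H : SimpleGraph W} {g : W → C} {u v : W}
    (p : (H.deleteEdges (chgSet H g)).Walk u v) : ∀ w ∈ p.support, g w = g u := by
  induction p with
  | nil => intro w hw; rw [SimpleGraph.Walk.support_nil, List.mem_singleton] at hw; rw [hw]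
  | cons h q ih =>
    intro w hw
    rw [SimpleGraph.Walk.support_cons, List.mem_cons] at hw
    rcases hw with rfl | hw
    · rfl
    · rw [ih w hw, (del_chg_adj h).2]

lemma reach_del_of_const {H : SimpleGraph W} {g : W → C} {u v : W}
    (p : H.Walk u v) (hconst : ∀ w ∈ p.support, g w = g u) :
    (H.deleteEdges (chgSet H g)).Reachable u v := by
  induction p with
  | nil => exact SimpleGraph.Reachable.refl _
  | @cons u m v h q ih =>
    have hm : g m = g u := hconst m (by simp)
    have hadj : (H.deleteEdges (chgSet H g)).Adj u m := adj_del_chg h hm.symm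
    refine hadj.reachable.trans (ih fun w hw => ?_)
    rw [hconst w (by simp [hw]), hm]

lemma ncard_range_le_card_cc [Finite W] (H : SimpleGraph W) (g : W → C) :
    (Set.range g).ncard ≤ Nat.card (H.deleteEdges (chgSet H g)).ConnectedComponent := by
  classical
  rw [← Nat.card_coe_set_eq]
  refine Nat.card_le_card_of_injective
    (fun c => (H.deleteEdges (chgSet H g)).connectedComponentMk c.2.choose) ?_
  intro c c' h
  obtain ⟨p⟩ := SimpleGraph.ConnectedComponent.exact h
  have h1 : g c.2.choose = c.1 := c.2.choose_spec
  have h2 : g c'.2.choose = c'.1 := c'.2.choose_spec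
  have h3 := const_of_del_walk p _ p.end_mem_support
  exact Subtype.ext (h1 ▸ h2 ▸ h3.symm)

lemma card_cc_le_ncard_range [Finite W] (H : SimpleGraph W) (g : W → C)
    (hfib : ∀ u v, g u = g v → (H.deleteEdges (chgSet H g)).Reachable u v) :
    Nat.card (H.deleteEdges (chgSet H g)).ConnectedComponent ≤ (Set.range g).ncard := by
  rw [← Nat.card_coe_set_eq]
  refine Nat.card_le_card_of_injective
    (SimpleGraph.ConnectedComponent.lift
      (fun v => (⟨g v, Set.mem_range_self v⟩ : Set.range g)) ?_) ?_
  · intro v w p _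
    exact Subtype.ext (const_of_del_walk p _ p.end_mem_support).symm
  · intro c c' h
    obtain ⟨u, rfl⟩ := c.exists_rep
    obtain ⟨u', rfl⟩ := c'.exists_rep
    have h' : (⟨g u, Set.mem_range_self u⟩ : Set.range g) = ⟨g u', Set.mem_range_self u'⟩ := h
    exact SimpleGraph.ConnectedComponent.sound (hfib u u' (congrArg Subtype.val h'))


lemma reach_delete_cases {H : SimpleGraph W} {a b : W} :
    ∀ {u v : W}, H.Walk u v →
    (H.deleteEdges {s(a, b)}).Reachable u v ∨
    ((H.deleteEdges {s(a, b)}).Reachable u a ∧ (H.deleteEdges {s(a, b)}).Reachable b v) ∨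
    ((H.deleteEdges {s(a, b)}).Reachable u b ∧ (H.deleteEdges {s(a, b)}).Reachable a v) := by
  intro u v p
  induction p with
  | nil => exact Or.inl (SimpleGraph.Reachable.refl _)
  | @cons u m v h q ih =>
    by_cases he : s(u, m) = s(a, b)
    · rw [Sym2.eq_iff] at he
      rcases he with ⟨rfl, rfl⟩ | ⟨rfl, rfl⟩
      · rcases ih with h1 | ⟨h2, h3⟩ | ⟨h4, h5⟩
        · exact Or.inr (Or.inl ⟨SimpleGraph.Reachable.refl _, h1⟩)
        · exact Or.inl (h2.symm.trans h3)
        · exact Or.inl h5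
      · rcases ih with h1 | ⟨h2, h3⟩ | ⟨h4, h5⟩
        · exact Or.inr (Or.inr ⟨SimpleGraph.Reachable.refl _, h1⟩)
        · exact Or.inl h3
        · exact Or.inl (h4.symm.trans h5)
    · have hadj : (H.deleteEdges {s(a, b)}).Adj u m := by
        rw [SimpleGraph.deleteEdges_adj]
        exact ⟨h, by simpa using he⟩
      rcases ih with h1 | ⟨h2, h3⟩ | ⟨h4, h5⟩
      · exact Or.inl (hadj.reachable.trans h1)
      · exact Or.inr (Or.inl ⟨hadj.reachable.trans h2, h3⟩)
      · exact Or.inr (Or.inr ⟨hadj.reachable.trans h4, h5⟩)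

lemma card_cc_deleteEdge [Finite W] {H : SimpleGraph W} {a b : W} (hab : H.Adj a b) :
    Nat.card (H.deleteEdges {s(a, b)}).ConnectedComponent ≤
      Nat.card H.ConnectedComponent + 1 ∧
    (¬ (H.deleteEdges {s(a, b)}).Reachable a b →
      Nat.card (H.deleteEdges {s(a, b)}).ConnectedComponent =
        Nat.card H.ConnectedComponent + 1) := by
  classical
  set K := H.deleteEdges {s(a, b)} with hK
  haveI : Finite H.ConnectedComponent := Quot.finite _
  haveI : Finite K.ConnectedComponent := Quot.finite _
  let ψ : K.ConnectedComponent → H.ConnectedComponent :=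
    SimpleGraph.ConnectedComponent.map
      (SimpleGraph.Hom.ofLE (H.deleteEdges_le _))
  have hψ : ∀ u : W, ψ (K.connectedComponentMk u) = H.connectedComponentMk u := fun u => rfl
  let j : K.ConnectedComponent → H.ConnectedComponent ⊕ Unit :=
    fun c => if c = K.connectedComponentMk b then Sum.inr () else Sum.inl (ψ c)
  have key : ∀ u u' : W, j (K.connectedComponentMk u) = j (K.connectedComponentMk u') →
      K.connectedComponentMk u = K.connectedComponentMk u' := by
    intro u u' hj
    by_cases h1 : K.connectedComponentMk u = K.connectedComponentMk b <;>
      by_cases h2 : K.connectedComponentMk u' = K.connectedComponentMk b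
    · rw [h1, h2]
    · simp only [j, if_pos h1, if_neg h2] at hj
      exact absurd hj (by simp)
    · simp only [j, if_neg h1, if_pos h2] at hj
      exact absurd hj (by simp)
    · simp only [j, if_neg h1, if_neg h2, Sum.inl.injEq] at hj
      rw [hψ, hψ] at hj
      obtain ⟨p⟩ := SimpleGraph.ConnectedComponent.exact hj
      rcases reach_delete_cases p with hc | ⟨hc1, hc2⟩ | ⟨hc1, hc2⟩
      · exact SimpleGraph.ConnectedComponent.sound hc
      · exact absurd (SimpleGraph.ConnectedComponent.sound hc2.symm) h2
      · exact absurd (SimpleGraph.ConnectedComponent.sound hc1) h1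
  have hinj : Function.Injective j := by
    intro c c' hj
    obtain ⟨u, hu⟩ := c.exists_rep
    obtain ⟨u', hu'⟩ := c'.exists_rep
    rw [← hu, ← hu'] at hj ⊢
    exact key u u' hj
  constructor
  · calc Nat.card K.ConnectedComponent
        ≤ Nat.card (H.ConnectedComponent ⊕ Unit) := Nat.card_le_card_of_injective j hinj
      _ = Nat.card H.ConnectedComponent + 1 := by rw [Nat.card_sum]; simp
  · intro hbr
    have hsurj : Function.Surjective j := by
      rintro (c | u)
      · obtain ⟨u, hu⟩ := c.exists_rep
        rw [← hu]
        by_cases hub : K.connectedComponentMk u = K.connectedComponentMk b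
        · refine ⟨K.connectedComponentMk a, ?_⟩
          have hne : K.connectedComponentMk a ≠ K.connectedComponentMk b := fun h =>
            hbr (SimpleGraph.ConnectedComponent.exact h)
          simp only [j, if_neg hne, hψ, Sum.inl.injEq]
          have h3 : H.Reachable u b :=
            SimpleGraph.Reachable.mono (H.deleteEdges_le _)
              (SimpleGraph.ConnectedComponent.exact hub)
          exact congrArg Sum.inl (SimpleGraph.ConnectedComponent.sound (hab.reachable.trans h3.symm))
        · exact ⟨K.connectedComponentMk u, by simp only [j, if_neg hub, hψ]; rfl⟩
      · exact ⟨K.connectedComponentMk b, by simp only [j, if_pos rfl]⟩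
    rw [Nat.card_eq_of_bijective j ⟨hinj, hsurj⟩, Nat.card_sum]
    simp

lemma IsAcyclic.anti {H H' : SimpleGraph W} (hle : H' ≤ H) (ha : H.IsAcyclic) :
    H'.IsAcyclic := fun _ p hp => ha (p.mapLe hle) (hp.mapLe hle)

lemma card_cc_deleteEdges [Finite W] (H : SimpleGraph W) (S : Set (Sym2 W)) (hS : S ⊆ H.edgeSet) :
    Nat.card (H.deleteEdges S).ConnectedComponent ≤ Nat.card H.ConnectedComponent + S.ncard ∧
    (H.IsAcyclic → Nat.card (H.deleteEdges S).ConnectedComponent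
      = Nat.card H.ConnectedComponent + S.ncard) := by
  classical
  revert hS
  refine Set.Finite.induction_on S (Set.toFinite S) ?_ ?_
  · intro _
    simp
  · intro e S' heS' hS'fin ih hsub
    have hS'sub : S' ⊆ H.edgeSet := fun x hx => hsub (Set.mem_insert_of_mem _ hx)
    have ihs := ih hS'sub
    have hrw : H.deleteEdges (insert e S') = (H.deleteEdges S').deleteEdges {e} := by
      rw [SimpleGraph.deleteEdges_deleteEdges, Set.union_singleton]
    have hcard : (insert e S').ncard = S'.ncard + 1 := Set.ncard_insert_of_notMem heS' hS'fin
    induction e using Sym2.ind with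
    | _ x y =>
    have hadj : (H.deleteEdges S').Adj x y := by
      rw [SimpleGraph.deleteEdges_adj]
      exact ⟨(SimpleGraph.mem_edgeSet H).1 (hsub (Set.mem_insert _ _)), heS'⟩
    have hkey := card_cc_deleteEdge hadj
    constructor
    · rw [hrw, hcard]
      calc Nat.card ((H.deleteEdges S').deleteEdges {s(x,y)}).ConnectedComponent
          ≤ Nat.card (H.deleteEdges S').ConnectedComponent + 1 := hkey.1
        _ ≤ Nat.card H.ConnectedComponent + S'.ncard + 1 := by omega
    · intro hacyc
      have hacyc' : (H.deleteEdges S').IsAcyclic := IsAcyclic.anti (H.deleteEdges_le _) hacyc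
      have hbridge : ¬ ((H.deleteEdges S').deleteEdges {s(x,y)}).Reachable x y := by
        have := (SimpleGraph.isAcyclic_iff_forall_adj_isBridge.1 hacyc') hadj
        rw [SimpleGraph.isBridge_iff] at this
        exact this
      rw [hrw, hcard, hkey.2 hbridge, ihs.2 hacyc]
      omega

lemma card_cc_connected [Finite W] {H : SimpleGraph W} (hc : H.Connected) :
    Nat.card H.ConnectedComponent = 1 := by
  haveI : Nonempty W := hc.nonempty
  haveI : Subsingleton H.ConnectedComponent := ⟨fun c c' => by
    obtain ⟨u, hu⟩ := c.exists_rep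
    obtain ⟨v, hv⟩ := c'.exists_rep
    rw [← hu, ← hv]
    exact SimpleGraph.ConnectedComponent.sound (hc.preconnected u v)⟩
  haveI : Nonempty H.ConnectedComponent := ⟨H.connectedComponentMk (Classical.arbitrary W)⟩
  rw [Nat.card_eq_one_iff_unique]
  exact ⟨inferInstance, inferInstance⟩

lemma score_lower_bound [Finite W] {H : SimpleGraph W} (hc : H.Connected) (g : W → C) :
    (Set.range g).ncard ≤ changedEdges H g + 1 := by
  have h1 := ncard_range_le_card_cc H g
  have h2 := (card_cc_deleteEdges H (chgSet H g) (fun e he => he.1)).1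
  rw [card_cc_connected hc] at h2
  rw [changedEdges_eq]
  omega

lemma score_upper_bound [Finite W] {H : SimpleGraph W} (hc : H.Connected)
    (ha : H.IsAcyclic) (g : W → C)
    (hfib : ∀ u v, g u = g v → (H.deleteEdges (chgSet H g)).Reachable u v) :
    changedEdges H g + 1 ≤ (Set.range g).ncard := by
  have h1 := card_cc_le_ncard_range H g hfib
  have h2 := (card_cc_deleteEdges H (chgSet H g) (fun e he => he.1)).2 ha
  rw [card_cc_connected hc] at h2
  rw [changedEdges_eq]
  omega

lemma fib_of_opt [Finite W] {H : SimpleGraph W} (hc : H.Connected) (ha : H.IsAcyclic)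
    (g : W → C) (hopt : changedEdges H g + 1 = (Set.range g).ncard) :
    ∀ u v, g u = g v → (H.deleteEdges (chgSet H g)).Reachable u v := by
  classical
  set K := H.deleteEdges (chgSet H g) with hKdef
  haveI : Finite K.ConnectedComponent := Quot.finite _
  let F : Set.range g → K.ConnectedComponent := fun c => K.connectedComponentMk c.2.choose
  have hFg : ∀ c : Set.range g, g c.2.choose = c.1 := fun c => c.2.choose_spec
  have hFinj : Function.Injective F := by
    intro c c' h
    obtain ⟨p⟩ := SimpleGraph.ConnectedComponent.exact h
    have h3 := const_of_del_walk p _ p.end_mem_support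
    exact Subtype.ext ((hFg c).symm.trans (h3.symm.trans (hFg c')))
  have hcard : Nat.card (Set.range g) = Nat.card K.ConnectedComponent := by
    have h2 := (card_cc_deleteEdges H (chgSet H g) (fun e he => he.1)).2 ha
    rw [card_cc_connected hc] at h2
    rw [Nat.card_coe_set_eq, h2, ← changedEdges_eq]
    omega
  have hFbij : Function.Bijective F := (Nat.bijective_iff_injective_and_card F).2 ⟨hFinj, hcard⟩
  intro u v hg
  obtain ⟨cu, hcu⟩ := hFbij.2 (K.connectedComponentMk u)
  obtain ⟨p⟩ := SimpleGraph.ConnectedComponent.exact hcu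
  have hgu : g u = cu.1 := by
    rw [← hFg cu]
    exact const_of_del_walk p u p.end_mem_support
  obtain ⟨cv, hcv⟩ := hFbij.2 (K.connectedComponentMk v)
  obtain ⟨q⟩ := SimpleGraph.ConnectedComponent.exact hcv
  have hgv : g v = cv.1 := by
    rw [← hFg cv]
    exact const_of_del_walk q v q.end_mem_support
  have hcc : cu = cv := Subtype.ext (by rw [← hgu, ← hgv, hg])
  exact SimpleGraph.ConnectedComponent.exact (hcu.symm.trans (hcc ▸ hcv))

lemma walk_induce {H : SimpleGraph W} {A : Set W} :
    ∀ {u v : W} (p : H.Walk u v) (hA : ∀ w ∈ p.support, w ∈ A),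
      ∃ q : (H.induce A).Walk ⟨u, hA u p.start_mem_support⟩ ⟨v, hA v p.end_mem_support⟩,
        ∀ x ∈ q.support, (x : W) ∈ p.support := by
  intro u v p
  induction p with
  | nil => exact fun hA => ⟨SimpleGraph.Walk.nil, by simp⟩
  | @cons u m v h q ih =>
    intro hA
    obtain ⟨q', hq'⟩ := ih (fun w hw => hA w (by simp [hw]))
    have hadj : (H.induce A).Adj ⟨u, hA u (SimpleGraph.Walk.cons h q).start_mem_support⟩
        ⟨m, hA m (by simp)⟩ := by
      simp only [SimpleGraph.comap_adj, Function.Embedding.coe_subtype]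
      exact h
    refine ⟨SimpleGraph.Walk.cons hadj q', ?_⟩
    intro x hx
    rw [SimpleGraph.Walk.support_cons, List.mem_cons] at hx
    rcases hx with rfl | hx
    · simp
    · exact (SimpleGraph.Walk.support_cons h q).symm ▸ List.mem_cons_of_mem _ (hq' x hx)

lemma induce_acyclic {H : SimpleGraph W} (ha : H.IsAcyclic) (A : Set W) :
    (H.induce A).IsAcyclic := fun _ c hc =>
  ha (c.map (SimpleGraph.Embedding.induce (G := H) A).toHom)
    (hc.map (SimpleGraph.Embedding.induce (G := H) A).injective)

lemma exists_boundary {H : SimpleGraph W} {B : Set W} :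
    ∀ {x y : W} (_ : H.Walk x y), x ∈ B → y ∉ B →
      ∃ a b, H.Adj a b ∧ a ∈ B ∧ b ∉ B := by
  intro x y p
  induction p with
  | nil => exact fun h1 h2 => absurd h1 h2
  | @cons x m y h q ih =>
    intro h1 h2
    by_cases hm : m ∈ B
    · exact ih hm h2
    · exact ⟨x, m, h, h1, hm⟩

end AuxGraph

section AuxPhylo
open SimpleGraph
variable {X : Type}

lemma PhyloTree.span_walk (T : PhyloTree X) {Y : Set X} {u v : T.V}
    (hu : u ∈ T.span Y) (hv : v ∈ T.span Y) :
    ∃ p : T.G.Walk u v, ∀ w ∈ p.support, w ∈ T.span Y := by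
  classical
  obtain ⟨x, hx, y, hy, p, hp, hup⟩ := hu
  obtain ⟨z, hz, w', hw', q, hq, hvq⟩ := hv
  obtain ⟨m⟩ := T.conn.preconnected (T.ι x) (T.ι z)
  refine ⟨(p.takeUntil u hup).reverse.append
    ((m.toPath : T.G.Walk _ _).append (q.takeUntil v hvq)), ?_⟩
  intro w hw
  rw [SimpleGraph.Walk.mem_support_append_iff] at hw
  rcases hw with hw | hw
  · rw [SimpleGraph.Walk.support_reverse, List.mem_reverse] at hw
    exact ⟨x, hx, y, hy, p, hp, SimpleGraph.Walk.support_takeUntil_subset p hup hw⟩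
  · rw [SimpleGraph.Walk.mem_support_append_iff] at hw
    rcases hw with hw | hw
    · exact ⟨x, hx, z, hz, m.toPath, m.toPath.2, hw⟩
    · exact ⟨z, hz, w', hw', q, hq, SimpleGraph.Walk.support_takeUntil_subset q hvq hw⟩

lemma PhyloTree.induce_span_connected (T : PhyloTree X) {Y : Set X} (hY : Y.Nonempty) :
    (T.G.induce (T.span Y)).Connected := by
  obtain ⟨y, hy⟩ := hY
  haveI : Nonempty ↥(T.span Y) := ⟨⟨T.ι y, T.ι_mem_span hy⟩⟩
  refine ⟨fun u v => ?_⟩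
  obtain ⟨p, hp⟩ := T.span_walk u.2 v.2
  obtain ⟨q, -⟩ := walk_induce p hp
  exact ⟨q⟩

lemma PhyloTree.path_in_inter (T : PhyloTree X) {u v : T.V} {A B : Set T.V}
    (p : T.G.Walk u v) (hp : ∀ w ∈ p.support, w ∈ A)
    (q : T.G.Walk u v) (hq : ∀ w ∈ q.support, w ∈ B) :
    ∃ r : T.G.Walk u v, ∀ w ∈ r.support, w ∈ A ∧ w ∈ B := by
  classical
  have hPQ : p.toPath = q.toPath := T.acyc.path_unique _ _
  refine ⟨(p.toPath : T.G.Walk u v), fun w hw => ⟨hp w (p.support_toPath_subset hw), ?_⟩⟩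
  have hw' : w ∈ (q.toPath : T.G.Walk u v).support := by rw [← hPQ]; exact hw
  exact hq w (q.support_toPath_subset hw')

lemma PhyloTree.fib_span_walk {C : Type} (T : PhyloTree X) {Y : Set X} (g : T.V → C)
    (hfibT : ∀ u v, g u = g v → (T.G.deleteEdges (chgSet T.G g)).Reachable u v)
    {u v : T.V} (hu : u ∈ T.span Y) (hv : v ∈ T.span Y) (hg : g u = g v) :
    ∃ r : T.G.Walk u v, ∀ w ∈ r.support, w ∈ T.span Y ∧ g w = g u := by
  classical
  obtain ⟨p0⟩ := hfibT u v hg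
  have hedges : ∀ e ∈ p0.edges, e ∈ T.G.edgeSet := by
    intro e he
    have h1 := p0.edges_subset_edgeSet he
    rw [SimpleGraph.edgeSet_deleteEdges] at h1
    exact h1.1
  have hp1 : ∀ w ∈ (p0.transfer T.G hedges).support, g w = g u := by
    rw [SimpleGraph.Walk.support_transfer]
    exact const_of_del_walk p0
  obtain ⟨p2, hp2⟩ := T.span_walk hu hv
  exact T.path_in_inter p2 hp2 (p0.transfer T.G hedges) hp1

lemma PhyloTree.reach_induce_del {C : Type} (T : PhyloTree X) {Y : Set X} (g : T.V → C)
    (hfibT : ∀ u v, g u = g v → (T.G.deleteEdges (chgSet T.G g)).Reachable u v)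
    (h : ↥(T.span Y) → C)
    (hcomp : ∀ w1 w2 : ↥(T.span Y), g w1.1 = g w2.1 → h w1 = h w2)
    (u v : ↥(T.span Y)) (hg : g u.1 = g v.1) :
    ((T.G.induce (T.span Y)).deleteEdges
      (chgSet (T.G.induce (T.span Y)) h)).Reachable u v := by
  obtain ⟨r, hr⟩ := T.fib_span_walk g hfibT u.2 v.2 hg
  obtain ⟨q, hq⟩ := walk_induce r (fun w hw => (hr w hw).1)
  exact reach_del_of_const q (fun x hx => hcomp x u ((hr x.1 (hq x hx)).2))

lemma PhyloTree.ι_not_mem_span (T : PhyloTree X) {Y : Set X} {k : X} (hk : k ∉ Y) :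
    T.ι k ∉ T.span Y := by
  classical
  haveI := T.finV
  rintro ⟨x, hx, y, hy, p, hp, hmem⟩
  have hxk : T.ι x ≠ T.ι k := fun h => hk (T.inj h ▸ hx)
  have hyk : T.ι y ≠ T.ι k := fun h => hk (T.inj h ▸ hy)
  set q := p.takeUntil (T.ι k) hmem with hqdef
  set r := p.dropUntil (T.ι k) hmem with hrdef
  have hq : q.IsPath := hp.takeUntil hmem
  have hr : r.IsPath := hp.dropUntil hmem
  have hqrev : ¬ q.reverse.Nil := SimpleGraph.Walk.not_nil_of_ne (fun h => hxk h.symm)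
  rw [SimpleGraph.Walk.not_nil_iff] at hqrev
  obtain ⟨n1, hadj1, q1, heq1⟩ := hqrev
  have hrnil : ¬ r.Nil := SimpleGraph.Walk.not_nil_of_ne (fun h => hyk h.symm)
  rw [SimpleGraph.Walk.not_nil_iff] at hrnil
  obtain ⟨n2, hadj2, r2, heq2⟩ := hrnil
  have hq1 : n1 ∈ q.reverse.support := by
    rw [heq1, SimpleGraph.Walk.support_cons]
    exact List.mem_cons_of_mem _ q1.start_mem_support
  have hq1' : n1 ∈ q.support := by
    rwa [SimpleGraph.Walk.support_reverse, List.mem_reverse] at hq1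
  have hn1k : n1 ≠ T.ι k := by
    intro h
    have hqp : q.reverse.IsPath := hq.reverse
    rw [heq1] at hqp
    exact ((SimpleGraph.Walk.cons_isPath_iff _ _).1 hqp).2 (h ▸ q1.start_mem_support)
  have hr2 : n2 ∈ r.support := by
    rw [heq2, SimpleGraph.Walk.support_cons]
    exact List.mem_cons_of_mem _ r2.start_mem_support
  have hn2k : n2 ≠ T.ι k := by
    intro h
    have hrp := hr
    rw [heq2] at hrp
    exact ((SimpleGraph.Walk.cons_isPath_iff _ _).1 hrp).2 (h ▸ r2.start_mem_support)
  have hsup : p.support = q.support ++ r.support.tail := by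
    rw [hqdef, hrdef, ← SimpleGraph.Walk.support_append, SimpleGraph.Walk.take_spec]
  have hnodup := hp.support_nodup
  rw [hsup] at hnodup
  have hdisj := List.disjoint_of_nodup_append hnodup
  have hne : n1 ≠ n2 := by
    rintro rfl
    refine hdisj hq1' ?_
    have := SimpleGraph.Walk.support_eq_cons r
    rw [this, List.mem_cons] at hr2
    rcases hr2 with h | h
    · exact absurd h hn1k
    · exact h
  have hsub : ({n1, n2} : Set T.V) ⊆ T.G.neighborSet (T.ι k) := by
    intro w hw
    rcases hw with rfl | rfl
    · exact hadj1
    · exact hadj2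
  have hcard := Set.ncard_le_ncard hsub (Set.toFinite _)
  rw [Set.ncard_pair hne, T.leafDeg k] at hcard
  omega

lemma PhyloTree.restScore_eq {C : Type} [Finite C] (T : PhyloTree X) {Y : Set X}
    (hY : Y.Nonempty) (f : X → C) (h : ↥(T.span Y) → C)
    (hext : ∀ y : ↥Y, h ⟨T.ι y.1, T.ι_mem_span y.2⟩ = f y.1)
    (hfib : ∀ u v, h u = h v →
      ((T.G.induce (T.span Y)).deleteEdges
        (chgSet (T.G.induce (T.span Y)) h)).Reachable u v)
    (hrange : Set.range h = f '' Y) :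
    T.restScore Y f = (f '' Y).ncard - 1 := by
  haveI := T.finV
  haveI : Finite ↥(T.span Y) := Subtype.finite
  have hconn := T.induce_span_connected hY
  have hacyc := induce_acyclic T.acyc (T.span Y)
  have hub : changedEdges (T.G.induce (T.span Y)) h ≤ (f '' Y).ncard - 1 := by
    have h1 := score_upper_bound hconn hacyc h hfib
    rw [hrange] at h1
    omega
  have hmem : changedEdges (T.G.induce (T.span Y)) h ∈
      {n : ℕ | ∃ g' : ↥(T.span Y) → C,
        (∀ y : ↥Y, g' ⟨T.ι y.1, T.ι_mem_span y.2⟩ = f y.1) ∧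
        n = changedEdges (T.G.induce (T.span Y)) g'} := ⟨h, hext, rfl⟩
  have hlb : ∀ n ∈ {n : ℕ | ∃ g' : ↥(T.span Y) → C,
      (∀ y : ↥Y, g' ⟨T.ι y.1, T.ι_mem_span y.2⟩ = f y.1) ∧
      n = changedEdges (T.G.induce (T.span Y)) g'}, (f '' Y).ncard - 1 ≤ n := by
    rintro n ⟨g', hg', rfl⟩
    have h1 := score_lower_bound hconn g'
    have h2 : f '' Y ⊆ Set.range g' := by
      rintro c ⟨x, hx, rfl⟩
      exact ⟨⟨T.ι x, T.ι_mem_span hx⟩, hg' ⟨x, hx⟩⟩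
    have h3 := Set.ncard_le_ncard h2 (Set.toFinite _)
    omega
  have hrs : T.restScore Y f = sInf {n : ℕ | ∃ g' : ↥(T.span Y) → C,
      (∀ y : ↥Y, g' ⟨T.ι y.1, T.ι_mem_span y.2⟩ = f y.1) ∧
      n = changedEdges (T.G.induce (T.span Y)) g'} := rfl
  rw [hrs]
  exact le_antisymm ((Nat.sInf_le hmem).trans hub) (le_csInf ⟨_, hmem⟩ hlb)

end AuxPhylo

/-- If `f` is homoplasy-free on the binary phylogenetic `X`-tree `T`
(`|X| ≥ 3`) and `k ∈ X`, then the parsimony score of `f|_{X∖{k}}` on `T|_{X∖{k}}` equals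
`l_T(f)` if the state `f k` also occurs among `X∖{k}`, and `l_T(f) - 1` otherwise. -/
theorem homoplasyFree_restrict_score {X C : Type} [Finite C] (hX : 3 ≤ Nat.card X)
    (T : PhyloTree X) (f : X → C) (hf : T.score f = (Set.range f).ncard - 1) (k : X) :
    (f k ∈ f '' {x | x ≠ k} → T.restScore {x | x ≠ k} f = T.score f) ∧
    (f k ∉ f '' {x | x ≠ k} → T.restScore {x | x ≠ k} f = T.score f - 1) := by
  classical
  haveI := T.finV
  haveI : Finite X := Nat.finite_of_card_ne_zero (by omega)
  haveI : Nontrivial X := Finite.one_lt_card_iff_nontrivial.1 (by omega)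
  set Y : Set X := {x | x ≠ k} with hYdef
  clear_value Y
  obtain ⟨y0, hy0⟩ : ∃ y : X, y ≠ k := exists_ne k
  have hy0Y : y0 ∈ Y := by rw [hYdef]; exact hy0
  have hYne : Y.Nonempty := ⟨y0, hy0Y⟩
  -- an optimal extension exists
  have hsetne : {n : ℕ | ∃ g : T.V → C, (∀ x, g (T.ι x) = f x) ∧
      n = changedEdges T.G g}.Nonempty := by
    refine ⟨_, fun v => if h : ∃ x, T.ι x = v then f h.choose else f k, fun x => ?_, rfl⟩
    have hex : ∃ x', T.ι x' = T.ι x := ⟨x, rfl⟩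
    show (if h : ∃ x', T.ι x' = T.ι x then f h.choose else f k) = f x
    rw [dif_pos hex]
    exact congrArg f (T.inj hex.choose_spec)
  have hscore_mem := Nat.sInf_mem hsetne
  obtain ⟨g, hgext, hgchg⟩ := hscore_mem
  have hgchg' : changedEdges T.G g = T.score f := hgchg.symm
  clear hgchg hsetne
  have hrange_f_ne : (Set.range f).Nonempty := ⟨f k, ⟨k, rfl⟩⟩
  have hrf_pos : 0 < (Set.range f).ncard := (Set.ncard_pos (Set.toFinite _)).2 hrange_f_ne
  have hrange_sub : Set.range f ⊆ Set.range g := by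
    rintro c ⟨x, rfl⟩
    exact ⟨T.ι x, hgext x⟩
  have hchg : changedEdges T.G g = (Set.range f).ncard - 1 := by rw [hgchg', hf]
  have hCC1 := score_lower_bound T.conn g
  have hgle : (Set.range g).ncard ≤ (Set.range f).ncard := by omega
  have hrange_eq : Set.range f = Set.range g :=
    Set.eq_of_subset_of_ncard_le hrange_sub hgle (Set.toFinite _)
  have hncard_eq : (Set.range f).ncard = (Set.range g).ncard := by rw [hrange_eq]
  have hopt : changedEdges T.G g + 1 = (Set.range g).ncard := by omega
  have hfibT := fib_of_opt T.conn T.acyc g hopt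
  have huniv : (Set.univ : Set X) = insert k Y := by
    ext x
    by_cases h : x = k <;> simp [hYdef, h]
  have hrfY : Set.range f = insert (f k) (f '' Y) := by
    rw [← Set.image_univ, huniv, Set.image_insert_eq]
  have hgmem : ∀ w : T.V, g w ∈ Set.range f := fun w => hrange_eq ▸ ⟨w, rfl⟩
  constructor
  · -- Case 1 : f k is attained on Y
    intro hk
    have hext : ∀ y : ↥Y, (fun w : ↥(T.span Y) => g w.1) ⟨T.ι y.1, T.ι_mem_span y.2⟩
        = f y.1 := fun y => hgext y.1
    have hfib : ∀ u v, (fun w : ↥(T.span Y) => g w.1) u = (fun w : ↥(T.span Y) => g w.1) v →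
        ((T.G.induce (T.span Y)).deleteEdges
          (chgSet (T.G.induce (T.span Y)) (fun w : ↥(T.span Y) => g w.1))).Reachable u v :=
      fun u v hg' => T.reach_induce_del g hfibT _ (fun w1 w2 e => e) u v hg'
    have hrange_h : Set.range (fun w : ↥(T.span Y) => g w.1) = f '' Y := by
      apply Set.Subset.antisymm
      · rintro c ⟨w, rfl⟩
        show g w.1 ∈ f '' Y
        have h1 : g w.1 ∈ Set.range f := hgmem w.1
        rw [hrfY] at h1
        rcases h1 with h1 | h1
        · rw [h1]; exact hk
        · exact h1
      · rintro c ⟨x, hx, rfl⟩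
        exact ⟨⟨T.ι x, T.ι_mem_span hx⟩, hgext x⟩
    have hres := T.restScore_eq hYne f _ hext hfib hrange_h
    have hsets : Set.range f = f '' Y := by rw [hrfY, Set.insert_eq_of_mem hk]
    rw [hres, hf, ← hsets]
  · -- Case 2 : f k is not attained on Y
    intro hk
    have hfyk : ∀ y : X, y ∈ Y → f y ≠ f k := by
      intro y hy hcontra
      exact hk ⟨y, hy, hcontra⟩
    have hr2 : (Set.range f).ncard = (f '' Y).ncard + 1 := by
      rw [hrfY, Set.ncard_insert_of_notMem hk (Set.toFinite _)]
    have hfinal : T.restScore Y f = (f '' Y).ncard - 1 → T.restScore Y f = T.score f - 1 := by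
      intro hres
      rw [hres, hf]
      omega
    by_cases hBne : {w : ↥(T.span Y) | g w.1 = f k}.Nonempty
    · -- repaint the f k fiber
      obtain ⟨u0, hu0⟩ := hBne
      have hconn := T.induce_span_connected hYne
      have hv0 : (⟨T.ι y0, T.ι_mem_span hy0Y⟩ : ↥(T.span Y)) ∉
          {w : ↥(T.span Y) | g w.1 = f k} := by
        intro hmem
        exact hfyk y0 hy0Y ((hgext y0).symm.trans hmem)
      obtain ⟨a, b, hadj, haB, hbB⟩ :=
        exists_boundary (hconn.preconnected u0 ⟨T.ι y0, T.ι_mem_span hy0Y⟩).some hu0 hv0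
      have hc0 : g b.1 ≠ f k := hbB
      have hc0Y : g b.1 ∈ f '' Y := by
        have h1 := hgmem b.1
        rw [hrfY] at h1
        rcases h1 with h1 | h1
        · exact absurd h1 hc0
        · exact h1
      have hcomp : ∀ w1 w2 : ↥(T.span Y), g w1.1 = g w2.1 →
          (fun w : ↥(T.span Y) => if g w.1 = f k then g b.1 else g w.1) w1
          = (fun w : ↥(T.span Y) => if g w.1 = f k then g b.1 else g w.1) w2 := by
        intro w1 w2 e
        show (if g w1.1 = f k then g b.1 else g w1.1) = _
        rw [e]
      have hext : ∀ y : ↥Y,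
          (fun w : ↥(T.span Y) => if g w.1 = f k then g b.1 else g w.1)
            ⟨T.ι y.1, T.ι_mem_span y.2⟩ = f y.1 := by
        intro y
        show (if g (T.ι y.1) = f k then g b.1 else g (T.ι y.1)) = f y.1
        rw [hgext y.1, if_neg (hfyk y.1 y.2)]
      have hha : (fun w : ↥(T.span Y) => if g w.1 = f k then g b.1 else g w.1) a = g b.1 := by
        show (if g a.1 = f k then g b.1 else g a.1) = g b.1
        rw [if_pos (show g a.1 = f k from haB)]
      have hhb : (fun w : ↥(T.span Y) => if g w.1 = f k then g b.1 else g w.1) b = g b.1 := by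
        show (if g b.1 = f k then g b.1 else g b.1) = g b.1
        rw [ite_self]
      have hreach := T.reach_induce_del g hfibT
        (fun w : ↥(T.span Y) => if g w.1 = f k then g b.1 else g w.1) hcomp
      have hifpos : ∀ w : ↥(T.span Y), g w.1 = f k →
          (fun w : ↥(T.span Y) => if g w.1 = f k then g b.1 else g w.1) w = g b.1 := by
        intro w hw
        show (if g w.1 = f k then g b.1 else g w.1) = g b.1
        rw [if_pos hw]
      have hifneg : ∀ w : ↥(T.span Y), g w.1 ≠ f k →
          (fun w : ↥(T.span Y) => if g w.1 = f k then g b.1 else g w.1) w = g w.1 := by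
        intro w hw
        show (if g w.1 = f k then g b.1 else g w.1) = g w.1
        rw [if_neg hw]
      have hfib : ∀ u v,
          (fun w : ↥(T.span Y) => if g w.1 = f k then g b.1 else g w.1) u
            = (fun w : ↥(T.span Y) => if g w.1 = f k then g b.1 else g w.1) v →
          ((T.G.induce (T.span Y)).deleteEdges
            (chgSet (T.G.induce (T.span Y))
              (fun w : ↥(T.span Y) => if g w.1 = f k then g b.1 else g w.1))).Reachable u v := by
        intro u v huv
        by_cases hu : g u.1 = f k <;> by_cases hv : g v.1 = f k
        · exact hreach u v (hu.trans hv.symm)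
        · have hvc0 : g v.1 = g b.1 := by
            rw [← hifneg v hv, ← huv, hifpos u hu]
          have r1 := hreach u a (hu.trans haB.symm)
          have r2 : ((T.G.induce (T.span Y)).deleteEdges
              (chgSet (T.G.induce (T.span Y))
                (fun w : ↥(T.span Y) => if g w.1 = f k then g b.1 else g w.1))).Reachable a b :=
            (adj_del_chg hadj (hha.trans hhb.symm)).reachable
          have r3 := hreach b v hvc0.symm
          exact (r1.trans r2).trans r3
        · have huc0 : g u.1 = g b.1 := by
            rw [← hifneg u hu, huv, hifpos v hv]
          have r1 := hreach u b huc0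
          have r2 : ((T.G.induce (T.span Y)).deleteEdges
              (chgSet (T.G.induce (T.span Y))
                (fun w : ↥(T.span Y) => if g w.1 = f k then g b.1 else g w.1))).Reachable b a :=
            (adj_del_chg hadj (hha.trans hhb.symm)).reachable.symm
          have r3 := hreach a v (haB.trans hv.symm)
          exact (r1.trans r2).trans r3
        · exact hreach u v (((hifneg u hu).symm.trans huv).trans (hifneg v hv))
      have hrange_h : Set.range
          (fun w : ↥(T.span Y) => if g w.1 = f k then g b.1 else g w.1) = f '' Y := by
        apply Set.Subset.antisymm
        · rintro c ⟨w, rfl⟩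
          show (if g w.1 = f k then g b.1 else g w.1) ∈ f '' Y
          by_cases hw : g w.1 = f k
          · rw [if_pos hw]
            exact hc0Y
          · rw [if_neg hw]
            have h1 := hgmem w.1
            rw [hrfY] at h1
            rcases h1 with h1 | h1
            · exact absurd h1 hw
            · exact h1
        · rintro c ⟨x, hx, rfl⟩
          exact ⟨⟨T.ι x, T.ι_mem_span hx⟩, hext ⟨x, hx⟩⟩
      exact hfinal (T.restScore_eq hYne f _ hext hfib hrange_h)
    · -- the f k fiber misses the span entirely
      have hBempty : ∀ w : ↥(T.span Y), g w.1 ≠ f k := by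
        intro w hw
        exact hBne ⟨w, hw⟩
      have hext : ∀ y : ↥Y, (fun w : ↥(T.span Y) => g w.1) ⟨T.ι y.1, T.ι_mem_span y.2⟩
          = f y.1 := fun y => hgext y.1
      have hfib : ∀ u v, (fun w : ↥(T.span Y) => g w.1) u = (fun w : ↥(T.span Y) => g w.1) v →
          ((T.G.induce (T.span Y)).deleteEdges
            (chgSet (T.G.induce (T.span Y)) (fun w : ↥(T.span Y) => g w.1))).Reachable u v :=
        fun u v hg' => T.reach_induce_del g hfibT _ (fun w1 w2 e => e) u v hg'
      have hrange_h : Set.range (fun w : ↥(T.span Y) => g w.1) = f '' Y := by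
        apply Set.Subset.antisymm
        · rintro c ⟨w, rfl⟩
          show g w.1 ∈ f '' Y
          have h1 := hgmem w.1
          rw [hrfY] at h1
          rcases h1 with h1 | h1
          · exact absurd h1 (hBempty w)
          · exact h1
        · rintro c ⟨x, hx, rfl⟩
          exact ⟨⟨T.ι x, T.ι_mem_span hx⟩, hgext x⟩
      exact hfinal (T.restScore_eq hYne f _ hext hfib hrange_h)
end

section
/- Let S be an alignment on a taxon set X that is homoplasy-free on a binary phylogenetic X-tree T. Then for every subset Y ⊆ X with 2 ≤ |Y|, the restriction T|_Y is an MP tree for S|_Y, i.e. l_{T|_Y}(S|_Y) ≤ l_{T'}(S|_Y) for every binary phylogenetic Y-tree T'. In particular, for each k = 4,…,|X|−1 there exists a subset Y ⊆ X with |Y| = k such that T|_Y is an MP tree for S|_Y. -/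
section MPAux

open SimpleGraph

variable {V C : Type} {G : SimpleGraph V}

/-- The set of change-edges. -/
def chSet (G : SimpleGraph V) (g : V → C) : Set (Sym2 V) :=
  {e ∈ G.edgeSet | ¬ (Sym2.map g e).IsDiag}

lemma changedEdges_eq_s3 (g : V → C) : changedEdges G g = (chSet G g).ncard := rfl

lemma mem_chSet {g : V → C} {u v : V} :
    s(u, v) ∈ chSet G g ↔ G.Adj u v ∧ g u ≠ g v := by
  simp [chSet, Sym2.map_pair_eq]

/-- All classes of a vertex colouring are connected. -/
def ClassConn (G : SimpleGraph V) (g : V → C) : Prop :=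
  ∀ a b : V, g a = g b → ∃ w : G.Walk a b, ∀ z ∈ w.support, g z = g a

open Classical in
/-- Recolouring: all vertices with colour `c` get colour `c'`. -/
noncomputable def recol (g : V → C) (c c' : C) : V → C := fun z => if g z = c then c' else g z

lemma chSet_recol_subset (g : V → C) (c c' : C) :
    chSet G (recol g c c') ⊆ chSet G g := by
  intro e
  induction e using Sym2.ind with
  | _ p q =>
    rw [mem_chSet, mem_chSet]
    rintro ⟨hadj, hne⟩
    refine ⟨hadj, fun h => hne ?_⟩
    simp only [recol]
    rw [h]

lemma recol_not_mem {g : V → C} {u v : V} :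
    s(u, v) ∉ chSet G (recol g (g u) (g v)) := by
  rw [mem_chSet]
  rintro ⟨-, hne⟩
  apply hne
  simp only [recol, if_pos rfl]
  by_cases h : g v = g u <;> simp [h]

lemma range_recol {g : V → C} {u v : V} (hne : g u ≠ g v) :
    Set.range (recol g (g u) (g v)) = Set.range g \ {g u} := by
  ext c
  constructor
  · rintro ⟨z, rfl⟩
    by_cases h : g z = g u
    · have hz : recol g (g u) (g v) z = g v := by simp [recol, h]
      rw [hz]
      exact ⟨⟨v, rfl⟩, fun hc => hne (Set.mem_singleton_iff.1 hc).symm⟩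
    · have hz : recol g (g u) (g v) z = g z := by simp [recol, h]
      rw [hz]
      exact ⟨⟨z, rfl⟩, by simpa using h⟩
  · rintro ⟨⟨z, rfl⟩, hc⟩
    have h : g z ≠ g u := by simpa using hc
    exact ⟨z, by simp [recol, h]⟩

lemma range_subset_insert_recol (g : V → C) (c c' : C) :
    Set.range g ⊆ insert c (Set.range (recol g c c')) := by
  rintro d ⟨z, rfl⟩
  by_cases h : g z = c
  · exact Or.inl h
  · exact Or.inr ⟨z, by simp [recol, h]⟩

lemma const_of_chSet_empty (hc : G.Preconnected) {g : V → C}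
    (h0 : chSet G g = ∅) (a b : V) : g a = g b := by
  obtain ⟨w⟩ := hc a b
  induction w with
  | nil => rfl
  | @cons x y z h w ih =>
    have hxy : g x = g y := by
      by_contra hne
      have : s(x, y) ∈ chSet G g := mem_chSet.2 ⟨h, hne⟩
      rw [h0] at this
      exact this
    exact hxy.trans ih

/-- Lower bound: on a connected finite graph, any colouring uses at most
`changedEdges + 1` colours. -/
lemma ncard_range_le_changed [Finite V] (hc : G.Connected) :
    ∀ n (g : V → C), changedEdges G g = n → (Set.range g).ncard ≤ n + 1 := by
  intro n
  induction n using Nat.strong_induction_on with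
  | _ n ih =>
    intro g hg
    by_cases hemp : chSet G g = ∅
    · obtain ⟨v0⟩ := hc.nonempty
      have hsub : Set.range g ⊆ {g v0} := by
        rintro c ⟨z, rfl⟩
        exact const_of_chSet_empty hc.preconnected hemp z v0
      calc (Set.range g).ncard ≤ ({g v0} : Set C).ncard :=
            Set.ncard_le_ncard hsub (Set.toFinite _)
        _ = 1 := Set.ncard_singleton _
        _ ≤ n + 1 := by omega
    · have hne : (chSet G g).Nonempty := Set.nonempty_iff_ne_empty.2 hemp
      obtain ⟨e, he⟩ := hne
      induction e using Sym2.ind with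
      | _ u v =>
        obtain ⟨hadj, hguv⟩ := mem_chSet.1 he
        set g' := recol g (g u) (g v) with hg'
        have hsub : chSet G g' ⊆ chSet G g \ {s(u, v)} := by
          intro e' he'
          exact ⟨chSet_recol_subset g (g u) (g v) he',
            fun h => recol_not_mem (h ▸ he')⟩
        have hlt : changedEdges G g' < n := by
          have h1 : (chSet G g').ncard ≤ (chSet G g \ {s(u,v)}).ncard :=
            Set.ncard_le_ncard hsub (Set.toFinite _)
          have h2 : (chSet G g \ {s(u,v)}).ncard = n - 1 := by
            rw [Set.ncard_diff_singleton_of_mem he, ← changedEdges_eq_s3, hg]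
          have h3 : 1 ≤ n := by
            rw [← hg, changedEdges_eq_s3]
            exact Set.ncard_pos (Set.toFinite _) |>.2 ⟨_, he⟩
          rw [changedEdges_eq_s3]
          omega
        have hih := ih _ hlt g' rfl
        have hins : (Set.range g).ncard ≤ (Set.range g').ncard + 1 := by
          calc (Set.range g).ncard ≤ (insert (g u) (Set.range g')).ncard :=
                Set.ncard_le_ncard (range_subset_insert_recol g (g u) (g v)) (Set.toFinite _)
            _ ≤ (Set.range g').ncard + 1 := Set.ncard_insert_le _ _
        omega


lemma cross_mem_edges {A B : Set V} {u v : V}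
    (hAB : ∀ z, z ∈ A → z ∈ B → False) (hu : u ∈ A) (hv : v ∈ B)
    (hcross : ∀ p q : V, G.Adj p q → p ∈ A → q ∈ B → p = u ∧ q = v) :
    ∀ {x b : V} (w : G.Walk x b), x ∈ B → b ∈ A →
      (∀ z ∈ w.support, z ∈ A ∪ B) → s(u, v) ∈ w.edges := by
  intro x b w
  induction w with
  | nil =>
    intro hx hb _
    exact (hAB _ hb hx).elim
  | @cons x y b h w ih =>
    intro hx hb hsupp
    by_cases hy : y ∈ B
    · have := ih hy hb (fun z hz => hsupp z (by simp [SimpleGraph.Walk.support_cons, hz]))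
      simp [SimpleGraph.Walk.edges_cons, this]
    · have hyA : y ∈ A := by
        have := hsupp y (by simp [SimpleGraph.Walk.support_cons])
        rcases this with h' | h'
        · exact h'
        · exact absurd h' hy
      obtain ⟨hyu, hxv⟩ := hcross y x h.symm hyA hx
      subst hyu; subst hxv
      simp [SimpleGraph.Walk.edges_cons, Sym2.eq_swap]

lemma walk_stay {A B : Set V} {u v : V}
    (hAB : ∀ z, z ∈ A → z ∈ B → False) (hu : u ∈ A) (hv : v ∈ B)
    (hcross : ∀ p q : V, G.Adj p q → p ∈ A → q ∈ B → p = u ∧ q = v) :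
    ∀ {a b : V} (w : G.Walk a b), a ∈ A → b ∈ A →
      (∀ z ∈ w.support, z ∈ A ∪ B) → w.edges.Nodup → ∀ z ∈ w.support, z ∈ A := by
  intro a b w
  induction w with
  | nil =>
    intro ha _ _ _ z hz
    simp only [SimpleGraph.Walk.support_nil, List.mem_singleton] at hz
    exact hz ▸ ha
  | @cons a x b h w ih =>
    intro ha hb hsupp hnd
    by_cases hx : x ∈ A
    · intro z hz
      simp only [SimpleGraph.Walk.support_cons, List.mem_cons] at hz
      rcases hz with rfl | hz
      · exact ha
      · exact ih hx hb (fun z hz => hsupp z (by simp [SimpleGraph.Walk.support_cons, hz]))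
          (by rw [SimpleGraph.Walk.edges_cons] at hnd; exact hnd.of_cons) z hz
    · have hxB : x ∈ B := by
        have := hsupp x (by simp [SimpleGraph.Walk.support_cons])
        rcases this with h' | h'
        · exact absurd h' hx
        · exact h'
      obtain ⟨hau, hxv⟩ := hcross a x h ha hxB
      have hmem : s(u, v) ∈ w.edges :=
        cross_mem_edges hAB hu hv hcross w hxB hb
          (fun z hz => hsupp z (by simp [SimpleGraph.Walk.support_cons, hz]))
      exfalso
      rw [SimpleGraph.Walk.edges_cons] at hnd
      have : s(a, x) = s(u, v) := by rw [hau, hxv]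
      exact (List.nodup_cons.1 hnd).1 (this ▸ hmem)

/-- Equality case: if a colouring on a connected finite graph attains
`changedEdges + 1 = #colours`, then all its colour classes are connected. -/
lemma classConn_of_changed_eq [Finite V] (hc : G.Connected) :
    ∀ n (g : V → C), changedEdges G g = n → n + 1 = (Set.range g).ncard →
      ClassConn G g := by
  intro n
  induction n using Nat.strong_induction_on with
  | _ n ih =>
    intro g hg heq
    classical
    by_cases hemp : chSet G g = ∅
    · intro a b _
      obtain ⟨w⟩ := hc.preconnected a b
      exact ⟨w, fun z _ => const_of_chSet_empty hc.preconnected hemp z a⟩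
    · have hne : (chSet G g).Nonempty := Set.nonempty_iff_ne_empty.2 hemp
      obtain ⟨e, he⟩ := hne
      induction e using Sym2.ind with
      | _ u v =>
        obtain ⟨hadj, hguv⟩ := mem_chSet.1 he
        have hpos : 1 ≤ n := by
          rw [← hg, changedEdges_eq_s3]
          exact Set.ncard_pos (Set.toFinite _) |>.2 ⟨_, he⟩
        set g' := recol g (g u) (g v) with hg'
        have hsub : chSet G g' ⊆ chSet G g \ {s(u, v)} := by
          intro e' he'
          exact ⟨chSet_recol_subset g (g u) (g v) he',
            fun h => recol_not_mem (h ▸ he')⟩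
        have hchle : changedEdges G g' ≤ n - 1 := by
          have h1 : (chSet G g').ncard ≤ (chSet G g \ {s(u,v)}).ncard :=
            Set.ncard_le_ncard hsub (Set.toFinite _)
          have h2 : (chSet G g \ {s(u,v)}).ncard = n - 1 := by
            rw [Set.ncard_diff_singleton_of_mem he, ← changedEdges_eq_s3, hg]
          rw [changedEdges_eq_s3]
          omega
        have hrange' : Set.range g' = Set.range g \ {g u} := range_recol hguv
        have hmemu : g u ∈ Set.range g := ⟨u, rfl⟩
        have hncard' : (Set.range g').ncard = n := by
          rw [hrange', Set.ncard_diff_singleton_of_mem hmemu, ← heq]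
          omega
        have hchge : n - 1 ≤ changedEdges G g' := by
          have := ncard_range_le_changed hc (changedEdges G g') g' rfl
          omega
        have hch' : changedEdges G g' = n - 1 := le_antisymm hchle hchge
        have hcc' : ClassConn G g' := ih (n-1) (by omega) g' hch' (by omega)
        -- the difference set is exactly {s(u,v)}
        have hDsub : chSet G g' ⊆ chSet G g := chSet_recol_subset g (g u) (g v)
        have hDcard : (chSet G g \ chSet G g').ncard = 1 := by
          rw [Set.ncard_diff hDsub (Set.toFinite _), ← changedEdges_eq_s3, ← changedEdges_eq_s3,
            hg, hch']
          omega
        have hDuv : s(u, v) ∈ chSet G g \ chSet G g' := ⟨he, recol_not_mem⟩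
        have hD : chSet G g \ chSet G g' = {s(u, v)} := by
          obtain ⟨a, ha⟩ := Set.ncard_eq_one.1 hDcard
          rw [ha] at hDuv ⊢
          rw [Set.mem_singleton_iff.1 hDuv]
        -- crossing edges are unique
        have hcross : ∀ p q : V, G.Adj p q → g p = g u → g q = g v → p = u ∧ q = v := by
          intro p q hpq hp hq
          have hmem : s(p, q) ∈ chSet G g := mem_chSet.2 ⟨hpq, by rw [hp, hq]; exact hguv⟩
          have hnot : s(p, q) ∉ chSet G g' := by
            rw [mem_chSet]
            rintro ⟨-, hne'⟩
            apply hne'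
            have h1 : g' p = g v := by simp [hg', recol, hp]
            have h2 : g' q = g v := by
              by_cases h : g q = g u
              · simp [hg', recol, h]
              · simp [hg', recol, h, hq]
            rw [h1, h2]
          have : s(p, q) ∈ ({s(u, v)} : Set (Sym2 V)) := hD ▸ ⟨hmem, hnot⟩
          have := Set.mem_singleton_iff.1 this
          rw [Sym2.eq_iff] at this
          rcases this with ⟨rfl, rfl⟩ | ⟨rfl, rfl⟩
          · exact ⟨rfl, rfl⟩
          · exact (hguv hp.symm).elim
        -- now prove classes of g are connected
        intro a b hab
        by_cases hcu : g a = g u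
        · -- a, b in class of u: use walk_stay
          have hab' : g' a = g' b := by
            have h1 : g' a = g v := by simp [hg', recol, hcu]
            have h2 : g' b = g v := by simp [hg', recol, hcu ▸ hab.symm]
            rw [h1, h2]
          obtain ⟨w, hw⟩ := hcc' a b hab'
          have hwa : g' a = g v := by simp [hg', recol, hcu]
          set p := w.bypass with hp
          have hpsupp : ∀ z ∈ p.support, g' z = g v := fun z hz =>
            (hw z (w.support_bypass_subset hz)).trans hwa
          have hsupp : ∀ z ∈ p.support, z ∈ {z | g z = g u} ∪ {z | g z = g v} := by
            intro z hz
            have := hpsupp z hz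
            by_cases h : g z = g u
            · exact Or.inl h
            · refine Or.inr ?_
              simpa [hg', recol, h] using this
          have hstay := walk_stay (A := {z | g z = g u}) (B := {z | g z = g v})
            (fun z h1 h2 => hguv (h1.symm.trans h2)) rfl rfl
            (fun p q hpq h1 h2 => hcross p q hpq h1 h2) p hcu (show g b = g u from hab ▸ hcu)
            hsupp w.bypass_isPath.isTrail.edges_nodup
          exact ⟨p, fun z hz => (hstay z hz).trans hcu.symm⟩
        · by_cases hcv : g a = g v
          · -- symmetric case via swapped classes
            have hab' : g' a = g' b := by
              have h1 : g' a = g v := by simp [hg', recol, hcu, hcv]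
              have h2 : g' b = g v := by
                have hbv : g b = g v := hab ▸ hcv
                have hbu : ¬ g b = g u := hab ▸ hcu
                simp [hg', recol, hbu, hbv]
              rw [h1, h2]
            obtain ⟨w, hw⟩ := hcc' a b hab'
            have hwa : g' a = g v := by simp [hg', recol, hcu, hcv]
            set p := w.bypass with hp
            have hpsupp : ∀ z ∈ p.support, g' z = g v := fun z hz =>
              (hw z (w.support_bypass_subset hz)).trans hwa
            have hsupp : ∀ z ∈ p.support, z ∈ {z | g z = g v} ∪ {z | g z = g u} := by
              intro z hz
              have := hpsupp z hz
              by_cases h : g z = g u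
              · exact Or.inr h
              · refine Or.inl ?_
                simpa [hg', recol, h] using this
            have hstay := walk_stay (A := {z | g z = g v}) (B := {z | g z = g u})
              (fun z h1 h2 => hguv (h2.symm.trans h1))
              (Set.mem_setOf.2 rfl) (Set.mem_setOf.2 rfl)
              (fun p q hpq h1 h2 => by
                obtain ⟨hq, hp'⟩ := hcross q p hpq.symm h2 h1
                exact ⟨hp', hq⟩) p hcv (show g b = g v from hab ▸ hcv)
              hsupp w.bypass_isPath.isTrail.edges_nodup
            exact ⟨p, fun z hz => (hstay z hz).trans hcv.symm⟩
          · -- class untouched by the recolouring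
            have hga : g' a = g a := by simp [hg', recol, hcu]
            have hgb : g' b = g b := by
              have : ¬ g b = g u := hab ▸ hcu
              simp [hg', recol, this]
            obtain ⟨w, hw⟩ := hcc' a b (by rw [hga, hgb]; exact hab)
            refine ⟨w, fun z hz => ?_⟩
            have hz' := (hw z hz).trans hga
            by_cases h : g z = g u
            · exfalso
              have : g' z = g v := by simp [hg', recol, h]
              exact hcv ((this ▸ hz').symm)
            · have : g' z = g z := by simp [hg', recol, h]
              exact this ▸ hz'


/-- In an acyclic graph, the (unique) path between two vertices is contained in the
support of every walk between them. -/
lemma path_support_subset_walk (hG : G.IsAcyclic) :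
    ∀ {a b : V} (w : G.Walk a b) (p : G.Walk a b), p.IsPath →
      ∀ z ∈ p.support, z ∈ w.support := by
  classical
  intro a b w
  cases w with
  | nil =>
    intro p hp z hz
    rw [SimpleGraph.Walk.isPath_iff_eq_nil] at hp
    subst hp
    simpa using hz
  | @cons a x b h w' =>
    intro p hp z hz
    set r := w'.bypass with hr
    have hrp : r.IsPath := w'.bypass_isPath
    by_cases hmem : a ∈ r.support
    · have hdp : (r.dropUntil a hmem).IsPath := hrp.dropUntil hmem
      have := hG.path_unique ⟨p, hp⟩ ⟨r.dropUntil a hmem, hdp⟩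
      have hps : p.support = (r.dropUntil a hmem).support :=
        congrArg SimpleGraph.Walk.support (Subtype.ext_iff.1 this)
      rw [hps] at hz
      have : z ∈ r.support := r.support_dropUntil_subset hmem hz
      have : z ∈ w'.support := w'.support_bypass_subset this
      simp [SimpleGraph.Walk.support_cons, this]
    · have hcp : (SimpleGraph.Walk.cons h r).IsPath := hrp.cons hmem
      have := hG.path_unique ⟨p, hp⟩ ⟨SimpleGraph.Walk.cons h r, hcp⟩
      have hps : p.support = (SimpleGraph.Walk.cons h r).support :=
        congrArg SimpleGraph.Walk.support (Subtype.ext_iff.1 this)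
      rw [hps] at hz
      simp only [SimpleGraph.Walk.support_cons, List.mem_cons] at hz ⊢
      rcases hz with rfl | hz
      · exact Or.inl rfl
      · exact Or.inr (w'.support_bypass_subset hz)

/-- Median property in acyclic graphs. -/
lemma path_support_subset_union (hG : G.IsAcyclic) {u v w : V}
    (p : G.Walk v w) (hp : p.IsPath) (q1 : G.Walk u v) (q2 : G.Walk u w) :
    ∀ z ∈ p.support, z ∈ q1.support ∨ z ∈ q2.support := by
  intro z hz
  have := path_support_subset_walk hG (q1.reverse.append q2) p hp z hz
  rw [SimpleGraph.Walk.mem_support_append_iff] at this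
  rcases this with h | h
  · left
    rw [SimpleGraph.Walk.support_reverse] at h
    exact List.mem_reverse.1 h
  · right; exact h

/-- Lift a walk with support in `s` to a walk in the induced graph. -/
lemma walk_induce_s3 {s : Set V} :
    ∀ {a b : V} (w : G.Walk a b), (∀ z ∈ w.support, z ∈ s) → ∀ (ha : a ∈ s) (hb : b ∈ s),
      ∃ w' : (G.induce s).Walk ⟨a, ha⟩ ⟨b, hb⟩, ∀ z ∈ w'.support, (z : V) ∈ w.support := by
  intro a b w
  induction w with
  | nil =>
    intro _ ha hb
    exact ⟨SimpleGraph.Walk.nil, by simp⟩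
  | @cons a x b h w' ih =>
    intro hw ha hb
    have hx : x ∈ s := hw x (by simp [SimpleGraph.Walk.support_cons])
    obtain ⟨w2, hw2⟩ := ih (fun z hz => hw z (by simp [SimpleGraph.Walk.support_cons, hz])) hx hb
    have hadj : (G.induce s).Adj ⟨a, ha⟩ ⟨x, hx⟩ := by
      simpa using h
    refine ⟨SimpleGraph.Walk.cons hadj w2, ?_⟩
    intro z hz
    simp only [SimpleGraph.Walk.support_cons, List.mem_cons] at hz
    rcases hz with rfl | hz
    · simp [SimpleGraph.Walk.support_cons]
    · simp [SimpleGraph.Walk.support_cons]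
      right
      exact hw2 z hz

/-- Paths are unique in an induced subgraph of an acyclic graph. -/
lemma induce_path_unique (hG : G.IsAcyclic) {s : Set V} :
    ∀ {x y : ↥s} (p q : (G.induce s).Walk x y), p.IsPath → q.IsPath → p = q := by
  intro x y p q hp hq
  let f : G.induce s →g G := ⟨Subtype.val, fun {a b} h => by simpa using h⟩
  have hinj : Function.Injective f := Subtype.val_injective
  have h1 : (p.map f).IsPath := SimpleGraph.Walk.map_isPath_of_injective hinj hp
  have h2 : (q.map f).IsPath := SimpleGraph.Walk.map_isPath_of_injective hinj hq
  have := hG.path_unique ⟨p.map f, h1⟩ ⟨q.map f, h2⟩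
  have heq : p.map f = q.map f := congrArg Subtype.val this
  exact SimpleGraph.Walk.map_injective_of_injective hinj x y heq


lemma classConn_recol {g : V → C} (hcl : ClassConn G g) {u v : V} (huv : G.Adj u v)
    (hne : g u ≠ g v) : ClassConn G (recol g (g u) (g v)) := by
  classical
  intro a b hab
  set g' := recol g (g u) (g v) with hg'
  by_cases hau : g a = g u
  · by_cases hbu : g b = g u
    · obtain ⟨w, hw⟩ := hcl a b (hau.trans hbu.symm)
      refine ⟨w, fun z hz => ?_⟩
      have hz' := hw z hz
      show g' z = g' a
      simp [hg', recol, hz'.trans hau, hau]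
    · have hga : g' a = g v := by simp [hg', recol, hau]
      have hgb : g' b = g b := by simp [hg', recol, hbu]
      have hbv : g b = g v := by rw [← hgb, ← hab, hga]
      obtain ⟨w1, hw1⟩ := hcl a u hau
      obtain ⟨w2, hw2⟩ := hcl v b hbv.symm
      refine ⟨w1.append (SimpleGraph.Walk.cons huv w2), fun z hz => ?_⟩
      rw [SimpleGraph.Walk.mem_support_append_iff] at hz
      show g' z = g' a
      rw [hga]
      rcases hz with hz | hz
      · have := hw1 z hz
        simp [hg', recol, this.trans hau]
      · rcases List.mem_cons.1 (by simpa [SimpleGraph.Walk.support_cons] using hz) with rfl | hz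
        · simp [hg', recol]
        · have hzv := hw2 z hz
          have hzu : ¬ g z = g u := by rw [hzv]; exact fun h => hne h.symm
          simp [hg', recol, hzu, hzv]
  · by_cases hbu : g b = g u
    · have hga : g' a = g a := by simp [hg', recol, hau]
      have hgb : g' b = g v := by simp [hg', recol, hbu]
      have hav : g a = g v := by rw [← hga, hab, hgb]
      obtain ⟨w1, hw1⟩ := hcl a v hav
      obtain ⟨w2, hw2⟩ := hcl u b hbu.symm
      refine ⟨w1.append (SimpleGraph.Walk.cons huv.symm w2), fun z hz => ?_⟩
      show g' z = g' a
      have hga' : g' a = g v := hga.trans hav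
      rw [hga']
      rw [SimpleGraph.Walk.mem_support_append_iff] at hz
      rcases hz with hz | hz
      · have hza := hw1 z hz
        have hzu : ¬ g z = g u := by rw [hza, hav]; exact fun h => hne h.symm
        simp [hg', recol, hzu, hza.trans hav]
      · rcases List.mem_cons.1 (by simpa [SimpleGraph.Walk.support_cons] using hz) with rfl | hz
        · simp [hg', recol]
        · have hzu := hw2 z hz
          simp [hg', recol, hzu]
    · have hga : g' a = g a := by simp [hg', recol, hau]
      have hgb : g' b = g b := by simp [hg', recol, hbu]
      obtain ⟨w, hw⟩ := hcl a b (by rw [← hga, hab, hgb])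
      refine ⟨w, fun z hz => ?_⟩
      have hz' := hw z hz
      show g' z = g' a
      have hzu : ¬ g z = g u := by rw [hz']; exact hau
      simp [hg', recol, hzu, hz', hga]

lemma cross_unique {g : V → C}
    (hU : ∀ {x y : V} (p q : G.Walk x y), p.IsPath → q.IsPath → p = q)
    (hcl : ClassConn G g) {u v p q : V} (huv : G.Adj u v) (hne : g u ≠ g v)
    (hpq : G.Adj p q) (hp : g p = g u) (hq : g q = g v) : p = u ∧ q = v := by
  classical
  obtain ⟨wA, hwA⟩ := hcl p u hp
  obtain ⟨wB, hwB⟩ := hcl v q hq.symm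
  set bA := wA.bypass with hbAdef
  set bB := wB.bypass with hbBdef
  have hbA : ∀ z ∈ bA.support, g z = g u := fun z hz =>
    (hwA z (wA.support_bypass_subset hz)).trans hp
  have hbB : ∀ z ∈ bB.support, g z = g v := fun z hz =>
    hwB z (wB.support_bypass_subset hz)
  have hW1 : (bA.append (SimpleGraph.Walk.cons huv bB)).IsPath := by
    rw [SimpleGraph.Walk.isPath_def, SimpleGraph.Walk.support_append,
      SimpleGraph.Walk.support_cons]
    simp only [List.tail_cons]
    refine List.Nodup.append wA.bypass_isPath.support_nodup wB.bypass_isPath.support_nodup ?_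
    intro z hz1 hz2
    exact hne ((hbA z hz1).symm.trans (hbB z hz2))
  have hW2 : (SimpleGraph.Walk.cons hpq SimpleGraph.Walk.nil).IsPath := by
    rw [SimpleGraph.Walk.isPath_def]
    simp only [SimpleGraph.Walk.support_cons, SimpleGraph.Walk.support_nil]
    refine List.nodup_cons.2 ⟨?_, List.nodup_singleton _⟩
    intro hmem
    have : p = q := by simpa using hmem
    exact hne (hp.symm.trans (this ▸ hq))
  have heq := hU _ _ hW1 hW2
  have hsupp := congrArg SimpleGraph.Walk.support heq
  have hu1 : u ∈ (bA.append (SimpleGraph.Walk.cons huv bB)).support := by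
    rw [SimpleGraph.Walk.mem_support_append_iff]
    exact Or.inl bA.end_mem_support
  have hv1 : v ∈ (bA.append (SimpleGraph.Walk.cons huv bB)).support := by
    rw [SimpleGraph.Walk.mem_support_append_iff]
    right
    rw [SimpleGraph.Walk.support_cons]
    exact List.mem_cons.2 (Or.inr bB.start_mem_support)
  rw [hsupp] at hu1 hv1
  have hu2 : u = p ∨ u = q := by simpa using hu1
  have hv2 : v = p ∨ v = q := by simpa using hv1
  constructor
  · rcases hu2 with h | h
    · exact h.symm
    · exfalso; exact hne (by rw [h]; exact hq)
  · rcases hv2 with h | h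
    · exfalso; exact hne (by rw [h]; exact hp.symm)
    · exact h.symm

/-- Upper bound: a colouring with connected classes on a finite graph with unique
paths has at most `#colours - 1` change-edges. -/
lemma changed_lt_ncard_range [Finite V] [Nonempty V]
    (hU : ∀ {x y : V} (p q : G.Walk x y), p.IsPath → q.IsPath → p = q) :
    ∀ n (g : V → C), (Set.range g).ncard = n → ClassConn G g →
      changedEdges G g + 1 ≤ n := by
  intro n
  induction n using Nat.strong_induction_on with
  | _ n ih =>
    intro g hn hcl
    classical
    by_cases hemp : chSet G g = ∅
    · have h0 : changedEdges G g = 0 := by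
        rw [changedEdges_eq_s3, hemp, Set.ncard_empty]
      have h1 : 1 ≤ n := by
        rw [← hn]
        exact Set.ncard_pos (Set.toFinite _) |>.2 (Set.range_nonempty g)
      omega
    · obtain ⟨e, he⟩ := Set.nonempty_iff_ne_empty.2 hemp
      induction e using Sym2.ind with
      | _ u v =>
        obtain ⟨hadj, hguv⟩ := mem_chSet.1 he
        set g' := recol g (g u) (g v) with hg'
        have hcl' : ClassConn G g' := classConn_recol hcl hadj hguv
        have hrange' : Set.range g' = Set.range g \ {g u} := range_recol hguv
        have hn2 : 2 ≤ n := by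
          rw [← hn]
          have hss : ({g u, g v} : Set C) ⊆ Set.range g := by
            rintro c (rfl | rfl)
            · exact ⟨u, rfl⟩
            · exact ⟨v, rfl⟩
          calc 2 = ({g u, g v} : Set C).ncard := (Set.ncard_pair hguv).symm
            _ ≤ _ := Set.ncard_le_ncard hss (Set.toFinite _)
        have hn' : (Set.range g').ncard = n - 1 := by
          rw [hrange', Set.ncard_diff_singleton_of_mem (show g u ∈ Set.range g from ⟨u, rfl⟩), hn]
        have hih := ih (n-1) (by omega) g' hn' hcl'
        have hsub : chSet G g ⊆ chSet G g' ∪ {s(u,v)} := by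
          intro e' he'
          induction e' using Sym2.ind with
          | _ p q =>
            obtain ⟨hpq, hne'⟩ := mem_chSet.1 he'
            by_cases h' : g' p = g' q
            · right
              by_cases hpu : g p = g u
              · have hqu : ¬ g q = g u := fun h => hne' (hpu.trans h.symm)
                have h1 : g' p = g v := by simp [hg', recol, hpu]
                have h2 : g' q = g q := by simp [hg', recol, hqu]
                have hqv : g q = g v := by rw [← h2, ← h', h1]
                obtain ⟨h3, h4⟩ := cross_unique hU hcl hadj hguv hpq hpu hqv
                simp [h3, h4]
              · by_cases hqu : g q = g u
                · have h1 : g' q = g v := by simp [hg', recol, hqu]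
                  have h2 : g' p = g p := by simp [hg', recol, hpu]
                  have hpv : g p = g v := by rw [← h2, h', h1]
                  obtain ⟨h3, h4⟩ := cross_unique hU hcl hadj hguv hpq.symm hqu hpv
                  have : s(p, q) = s(u, v) := by rw [h3, h4, Sym2.eq_swap]
                  simp [this]
                · exfalso
                  apply hne'
                  have h2 : g' p = g p := by simp [hg', recol, hpu]
                  have h3 : g' q = g q := by simp [hg', recol, hqu]
                  rw [← h2, h', h3]
            · exact Or.inl (mem_chSet.2 ⟨hpq, h'⟩)
        have hch : changedEdges G g ≤ changedEdges G g' + 1 := by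
          rw [changedEdges_eq_s3, changedEdges_eq_s3]
          calc (chSet G g).ncard ≤ (chSet G g' ∪ {s(u,v)}).ncard :=
                Set.ncard_le_ncard hsub (Set.toFinite _)
            _ ≤ (chSet G g').ncard + ({s(u,v)} : Set (Sym2 V)).ncard :=
                Set.ncard_union_le _ _
            _ = (chSet G g').ncard + 1 := by rw [Set.ncard_singleton]
        omega

lemma exit_edge {g : V → C} {c : C} :
    ∀ {a b : V} (w : G.Walk a b), g a = c → g b ≠ c →
      ∃ p q : V, G.Adj p q ∧ g p = c ∧ g q ≠ c := by
  intro a b w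
  induction w with
  | nil => intro ha hb; exact absurd ha hb
  | @cons a x b h w' ih =>
    intro ha hb
    by_cases hx : g x = c
    · exact ih hx hb
    · exact ⟨a, x, h, ha, hx⟩

/-- Recolour away all colours outside `P`, keeping classes connected and the
values at the distinguished vertices. -/
lemma reduce_colors [Finite V] (hconn : G.Connected) {I : Type}
    (wι : I → V) (f0 : I → C) (P : Set C) (hP : ∀ i, f0 i ∈ P) (i0 : I) :
    ∀ n (g : V → C), (Set.range g \ P).ncard = n → ClassConn G g →
      (∀ i, g (wι i) = f0 i) →
      ∃ g' : V → C, ClassConn G g' ∧ (∀ i, g' (wι i) = f0 i) ∧ Set.range g' ⊆ P := by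
  intro n
  induction n with
  | zero =>
    intro g hn hcl hext
    refine ⟨g, hcl, hext, ?_⟩
    have : Set.range g \ P = ∅ := (Set.ncard_eq_zero (Set.toFinite _)).1 hn
    exact Set.diff_eq_empty.1 this
  | succ n ih =>
    intro g hn hcl hext
    have hne : (Set.range g \ P).Nonempty :=
      Set.nonempty_of_ncard_ne_zero (by omega)
    obtain ⟨c, ⟨⟨z0, hz0⟩, hcP⟩⟩ := hne
    have hanchor : g (wι i0) ≠ c := by
      rw [hext i0]
      exact fun h => hcP (h ▸ hP i0)
    obtain ⟨wk⟩ := hconn.preconnected z0 (wι i0)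
    obtain ⟨p', q', hadj, hp', hq'⟩ := exit_edge wk hz0 hanchor
    have hpq : g p' ≠ g q' := by rw [hp']; exact fun h => hq' h.symm
    set g2 := recol g (g p') (g q') with hg2
    have hcl2 : ClassConn G g2 := classConn_recol hcl hadj hpq
    have hext2 : ∀ i, g2 (wι i) = f0 i := by
      intro i
      have hne2 : ¬ g (wι i) = g p' := by
        rw [hp', hext i]; exact fun h => hcP (h ▸ hP i)
      classical
      have heq2 : g2 (wι i) = g (wι i) := by simp [hg2, recol, hne2]
      rw [heq2, hext i]
    have hrange2 : Set.range g2 = Set.range g \ {g p'} := range_recol hpq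
    have hn2 : (Set.range g2 \ P).ncard = n := by
      have hset : Set.range g2 \ P = (Set.range g \ P) \ {c} := by
        rw [hrange2, hp']
        ext d
        simp only [Set.mem_diff, Set.mem_singleton_iff]
        tauto
      rw [hset, Set.ncard_diff_singleton_of_mem
        (show c ∈ Set.range g \ P from ⟨⟨z0, hz0⟩, hcP⟩), hn]
      omega
    exact ih g2 hn2 hcl2 hext2

end MPAux

section Assemble

open SimpleGraph

variable {X C : Type}

/-- The span of `Y` is closed under taking paths between its members. -/
lemma span_path_closed (T : PhyloTree X) (Y : Set X) {v w : T.V}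
    (hv : v ∈ T.span Y) (hw : w ∈ T.span Y) (p : T.G.Walk v w) (hp : p.IsPath) :
    ∀ z ∈ p.support, z ∈ T.span Y := by
  classical
  obtain ⟨x1, hx1, x2, hx2, p12, hp12, hv12⟩ := hv
  obtain ⟨x3, hx3, x4, hx4, p34, hp34, hw34⟩ := hw
  intro z hz
  obtain ⟨q0⟩ := T.conn.preconnected (T.ι x1) w
  set q := q0.bypass with hq
  have hqp : q.IsPath := q0.bypass_isPath
  have h1 := path_support_subset_union T.acyc p hp (p12.takeUntil v hv12) q z hz
  rcases h1 with h1 | h1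
  · exact ⟨x1, hx1, x2, hx2, p12, hp12, p12.support_takeUntil_subset hv12 h1⟩
  · obtain ⟨r0⟩ := T.conn.preconnected (T.ι x3) (T.ι x1)
    set r := r0.bypass with hr
    have hrp : r.IsPath := r0.bypass_isPath
    have h2 := path_support_subset_union T.acyc q hqp r (p34.takeUntil w hw34) z h1
    rcases h2 with h2 | h2
    · exact ⟨x3, hx3, x1, hx1, r, hrp, h2⟩
    · exact ⟨x3, hx3, x4, hx4, p34, hp34, p34.support_takeUntil_subset hw34 h2⟩

/-- Lower bound: the parsimony score of a character on any connected graph is at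
least the number of states used, minus one. -/
lemma ncard_range_le_gScore_succ {V : Type} [Finite V] {G : SimpleGraph V}
    (hc : G.Connected) {ι : X → V} (hinj : Function.Injective ι) [Nonempty C]
    (f : X → C) : (Set.range f).ncard ≤ gScore G ι f + 1 := by
  classical
  have hnon : {n : ℕ | ∃ g : V → C, (∀ x, g (ι x) = f x) ∧ n = changedEdges G g}.Nonempty := by
    refine ⟨changedEdges G (Function.extend ι f fun _ => Classical.arbitrary C),
      Function.extend ι f _, fun x => hinj.extend_apply f _ x, rfl⟩
  have hmem := Nat.sInf_mem hnon
  obtain ⟨g, hg, hval⟩ := hmem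
  have hsub : Set.range f ⊆ Set.range g := by
    rintro c ⟨x, rfl⟩
    exact ⟨ι x, hg x⟩
  calc (Set.range f).ncard ≤ (Set.range g).ncard :=
        Set.ncard_le_ncard hsub (Set.toFinite _)
    _ ≤ changedEdges G g + 1 := ncard_range_le_changed hc (changedEdges G g) g rfl
    _ = gScore G ι f + 1 := by rw [← hval]; rfl

/-- Key upper bound: the parsimony score of the restriction of a homoplasy-free
character to `T|_Y` is less than the number of states used on `Y`. -/
lemma restScore_lt (T : PhyloTree X) {Y : Set X} (hY : Y.Nonempty) (f : X → C)
    (hf : T.score f = (Set.range f).ncard - 1) :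
    T.restScore Y f + 1 ≤ (f '' Y).ncard := by
  classical
  haveI := T.finV
  haveI : Finite X := Finite.of_injective T.ι T.inj
  obtain ⟨y0, hy0⟩ := hY
  haveI : Nonempty C := ⟨f y0⟩
  -- an optimal extension on T
  have hnon : {n : ℕ | ∃ g : T.V → C, (∀ x, g (T.ι x) = f x) ∧ n = changedEdges T.G g}.Nonempty := by
    refine ⟨changedEdges T.G (Function.extend T.ι f fun _ => Classical.arbitrary C),
      Function.extend T.ι f _, fun x => T.inj.extend_apply f _ x, rfl⟩
  obtain ⟨g, hg, hval⟩ := Nat.sInf_mem hnon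
  have hscore : changedEdges T.G g = T.score f := hval.symm
  have hrange1 : 1 ≤ (Set.range f).ncard :=
    Set.ncard_pos (Set.toFinite _) |>.2 ⟨f y0, y0, rfl⟩
  have hch : changedEdges T.G g + 1 = (Set.range f).ncard := by
    rw [hscore, hf]
    exact Nat.sub_add_cancel hrange1
  have hsub : Set.range f ⊆ Set.range g := by
    rintro c ⟨x, rfl⟩; exact ⟨T.ι x, hg x⟩
  have hle := ncard_range_le_changed T.conn (changedEdges T.G g) g rfl
  have hrg : Set.range g = Set.range f := by
    refine (Set.eq_of_subset_of_ncard_le hsub ?_ (Set.toFinite _)).symm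
    exact hch ▸ hle
  have hch' : changedEdges T.G g + 1 = (Set.range g).ncard := by rw [hrg]; exact hch
  have hclg : ClassConn T.G g :=
    classConn_of_changed_eq T.conn (changedEdges T.G g) g rfl hch'
  -- pass to the induced graph on the span
  set s := T.span Y with hs
  haveI : Nonempty ↥s := ⟨⟨T.ι y0, T.ι_mem_span hy0⟩⟩
  set H := T.G.induce s with hH
  have hU : ∀ {x y : ↥s} (p q : H.Walk x y), p.IsPath → q.IsPath → p = q :=
    fun p q hp hq => induce_path_unique T.acyc p q hp hq
  -- connectivity of the span
  have hspanconn : H.Connected := by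
    refine ⟨fun a b => ?_⟩
    obtain ⟨w0⟩ := T.conn.preconnected a.1 b.1
    have hbp : w0.bypass.IsPath := w0.bypass_isPath
    have hsupp : ∀ z ∈ w0.bypass.support, z ∈ s :=
      span_path_closed T Y a.2 b.2 w0.bypass hbp
    obtain ⟨w', -⟩ := walk_induce_s3 w0.bypass hsupp a.2 b.2
    exact ⟨w'⟩
  -- the restricted colouring has connected classes on the span
  set h0 : ↥s → C := fun z => g z.1 with hh0
  have hcl0 : ClassConn H h0 := by
    intro a b hab
    obtain ⟨w, hw⟩ := hclg a.1 b.1 hab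
    have hbp : w.bypass.IsPath := w.bypass_isPath
    have hwcol : ∀ z ∈ w.bypass.support, g z = g a.1 :=
      fun z hz => hw z (w.support_bypass_subset hz)
    have hsupp : ∀ z ∈ w.bypass.support, z ∈ s :=
      span_path_closed T Y a.2 b.2 w.bypass hbp
    obtain ⟨w', hw'⟩ := walk_induce_s3 w.bypass hsupp a.2 b.2
    refine ⟨w', fun z hz => ?_⟩
    show g z.1 = g a.1
    exact hw z.1 (w.support_bypass_subset (hw' z hz))
  -- the restricted colouring extends `f` on `Y`
  set ι' : ↥Y → ↥s := fun y => ⟨T.ι y.1, T.ι_mem_span y.2⟩ with hι'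
  have hext0 : ∀ y : ↥Y, h0 (ι' y) = f y.1 := fun y => hg y.1
  -- recolour away colours outside `f '' Y`
  obtain ⟨hstar, hclstar, hextstar, hrangestar⟩ :=
    reduce_colors hspanconn ι' (fun y : ↥Y => f y.1) (f '' Y)
      (fun y => ⟨y.1, y.2, rfl⟩) ⟨y0, hy0⟩ ((Set.range h0 \ f '' Y).ncard) h0 rfl hcl0 hext0
  have hub := changed_lt_ncard_range hU ((Set.range hstar).ncard) hstar rfl hclstar
  have hPn : (Set.range hstar).ncard ≤ (f '' Y).ncard :=
    Set.ncard_le_ncard hrangestar (Set.toFinite _)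
  have hrest : T.restScore Y f ≤ changedEdges H hstar :=
    Nat.sInf_le ⟨hstar, hextstar, rfl⟩
  exact le_trans (Nat.add_le_add_right hrest 1) (le_trans hub hPn)

end Assemble


/-- If the alignment `S` is homoplasy-free on the binary phylogenetic
`X`-tree `T` (every character satisfies `l_T(f) = |f(X)| - 1`), then for every subset
`Y ⊆ X` with `|Y| ≥ 2` the restriction `T|_Y` is an MP tree for `S|_Y`; in particular,
for each `k` with `4 ≤ k ≤ |X| - 1` there exists a `k`-element subset `Y ⊆ X` such that
`T|_Y` is an MP tree for `S|_Y`. -/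
theorem homoplasyFree_hereditary {X C : Type} [Finite C] (T : PhyloTree X)
    (S : List (X → C)) (hS : ∀ f ∈ S, T.score f = (Set.range f).ncard - 1) :
    (∀ Y : Set X, 2 ≤ Y.ncard →
      ∀ T' : PhyloTree ↥Y, T.restScoreA Y S ≤ T'.scoreA (subAl Y S)) ∧
    (∀ k : ℕ, 4 ≤ k → k ≤ Nat.card X - 1 → ∃ Y : Set X, Y.ncard = k ∧
      ∀ T' : PhyloTree ↥Y, T.restScoreA Y S ≤ T'.scoreA (subAl Y S)) := by
  classical
  haveI := T.finV
  haveI : Finite X := Finite.of_injective T.ι T.inj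
  have main : ∀ Y : Set X, 2 ≤ Y.ncard →
      ∀ T' : PhyloTree ↥Y, T.restScoreA Y S ≤ T'.scoreA (subAl Y S) := by
    intro Y hY T'
    have hYne : Y.Nonempty := Set.nonempty_of_ncard_ne_zero (by omega)
    obtain ⟨y0, hy0⟩ := hYne
    unfold PhyloTree.restScoreA PhyloTree.scoreA gScoreA subAl
    rw [List.map_map]
    apply List.sum_le_sum
    intro f hf
    haveI : Nonempty C := ⟨f y0⟩
    haveI := T'.finV
    have hup := restScore_lt T ⟨y0, hy0⟩ f (hS f hf)
    have hlow := ncard_range_le_gScore_succ T'.conn T'.inj (fun y : ↥Y => f y.1)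
    rw [← Set.image_eq_range f Y] at hlow
    show T.restScore Y f ≤ gScore T'.G T'.ι (fun y : ↥Y => f y.1)
    exact Nat.le_of_succ_le_succ (le_trans hup hlow)
  refine ⟨main, fun k hk4 hkle => ?_⟩
  have hcard : k ≤ (Set.univ : Set X).ncard := by
    rw [Set.ncard_univ]
    omega
  obtain ⟨Y, -, hYk⟩ := Set.exists_subset_card_eq hcard
  exact ⟨Y, hYk, main Y (by omega)⟩
end

section
/- Let S be the alignment on X = {1,2,3,4,5} over the state set {A,C} consisting of two copies of AACCC, three copies of ACACC, three copies of AACCA, three copies of AACAC and four copies of AAACC (fifteen characters in total). Then T = ((1,3),2,(4,5)) is the unique MP tree for S. -/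
/-- The five-taxa binary alignment of Proposition `bennyprop` (states `A = 0`, `C = 1`):
two copies of `AACCC`, three of `ACACC`, three of `AACCA`, three of `AACAC` and four of
`AAACC`. -/
def Sben : List (Fin 5 → Fin 2) :=
  List.replicate 2 ![0,0,1,1,1] ++ List.replicate 3 ![0,1,0,1,1] ++
  List.replicate 3 ![0,0,1,1,0] ++ List.replicate 3 ![0,0,1,0,1] ++
  List.replicate 4 ![0,0,0,1,1]
namespace SbenAux
open SimpleGraph

lemma reach_mem {V : Type} {G : SimpleGraph V} {S : Set V}
    (hS : ∀ u v, u ∈ S → G.Adj u v → v ∈ S) {a b : V} (h : G.Reachable a b) (ha : a ∈ S) :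
    b ∈ S := by
  obtain ⟨w⟩ := h
  induction w with
  | nil => exact ha
  | cons h p ih => exact ih (hS _ _ ha h)

lemma changedEdges_equiv {V V' C : Type} (e : V ≃ V') (G : SimpleGraph V) (G' : SimpleGraph V')
    (hAdj : ∀ u v, G.Adj u v ↔ G'.Adj (e u) (e v)) (g : V' → C) :
    changedEdges G' g = changedEdges G (g ∘ e) := by
  unfold changedEdges
  have himg : {x ∈ G'.edgeSet | ¬(Sym2.map g x).IsDiag} =
      (Sym2.map e) '' {x ∈ G.edgeSet | ¬(Sym2.map (g ∘ e) x).IsDiag} := by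
    ext x
    induction x with
    | _ u' v' =>
      simp only [Set.mem_sep_iff, Set.mem_image, SimpleGraph.mem_edgeSet]
      constructor
      · rintro ⟨hadj, hne⟩
        refine ⟨s(e.symm u', e.symm v'), ⟨?_, ?_⟩, ?_⟩
        · exact (hAdj _ _).2 (by simpa using hadj)
        · simpa using hne
        · simp
      · rintro ⟨y, ⟨hy1, hy2⟩, hmap⟩
        induction y with
        | _ u v =>
          simp only [Sym2.map_pair_eq, Sym2.eq_iff] at hmap
          have hadj : G'.Adj (e u) (e v) := (hAdj _ _).1 hy1
          have hne : ¬ (Sym2.map (g ∘ e) s(u, v)).IsDiag := hy2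
          simp only [Sym2.map_pair_eq, Sym2.isDiag_iff_proj_eq, Function.comp_apply] at hne
          rcases hmap with ⟨h1, h2⟩ | ⟨h1, h2⟩ <;> subst h1 <;> subst h2 <;>
            simp only [Sym2.isDiag_iff_proj_eq, Sym2.map_pair_eq] <;>
            constructor <;> first
              | exact hadj | exact hadj.symm
              | (intro hc; exact hne (by simpa using hc)) | (intro hc; exact hne (by simpa using hc.symm))
  rw [himg, Set.ncard_image_of_injective _ (Sym2.map.injective e.injective)]

lemma gScore_equiv {V V' X C : Type} (e : V ≃ V') (G : SimpleGraph V) (G' : SimpleGraph V')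
    (hAdj : ∀ u v, G.Adj u v ↔ G'.Adj (e u) (e v)) (ι : X → V) (f : X → C) :
    gScore G ι f = gScore G' (fun x => e (ι x)) f := by
  unfold gScore
  congr 1
  ext n
  constructor
  · rintro ⟨g, hg, rfl⟩
    refine ⟨g ∘ e.symm, fun x => by simp [hg x], ?_⟩
    rw [changedEdges_equiv e G G' hAdj (g ∘ e.symm)]
    congr 1
    funext v; simp
  · rintro ⟨g, hg, rfl⟩
    exact ⟨g ∘ e, fun x => hg x, changedEdges_equiv e G G' hAdj g⟩

lemma gScore_reindex {V X Y C : Type} (G : SimpleGraph V) (ι : X → V) (ι' : Y → V)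
    (f : X → C) (f' : Y → C)
    (h : ∀ g : V → C, (∀ x, g (ι x) = f x) ↔ (∀ y, g (ι' y) = f' y)) :
    gScore G ι f = gScore G ι' f' := by
  unfold gScore
  congr 1
  ext n
  constructor
  · rintro ⟨g, hg, rfl⟩; exact ⟨g, (h g).1 hg, rfl⟩
  · rintro ⟨g, hg, rfl⟩; exact ⟨g, (h g).2 hg, rfl⟩

end SbenAux
namespace SbenAux

def g0 (u v : Fin 8) : Prop :=
  (u.val, v.val) ∈ [(0,5),(5,0),(1,5),(5,1),(5,6),(6,5),(2,6),(6,2),(6,7),(7,6),(3,7),(7,3),(4,7),(7,4)]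

instance : DecidableRel g0 := fun u v => by unfold g0; infer_instance

def G0 : SimpleGraph (Fin 8) where
  Adj := g0
  symm := ⟨by intro u v; exact (by decide : ∀ u v, g0 u v → g0 v u) u v⟩
  loopless := ⟨by intro u; exact (by decide : ∀ u, ¬ g0 u u) u⟩

instance : DecidableRel G0.Adj := fun u v => decidable_of_iff (g0 u v) Iff.rfl
instance (u v : Fin 8) : Decidable (G0.Adj u v) := decidable_of_iff (g0 u v) Iff.rfl

def edges0 : List (Sym2 (Fin 8)) := [s(0,5), s(1,5), s(5,6), s(2,6), s(6,7), s(3,7), s(4,7)]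

def scr (f : Fin 5 → Fin 2) : ℕ :=
  if f 0 = f 1 ∧ f 1 = f 2 ∧ f 2 = f 3 ∧ f 3 = f 4 then 0
  else if (f 1 = f 2 ∧ f 2 = f 3 ∧ f 3 = f 4) ∨ (f 0 = f 2 ∧ f 2 = f 3 ∧ f 3 = f 4) ∨
      (f 0 = f 1 ∧ f 1 = f 3 ∧ f 3 = f 4) ∨ (f 0 = f 1 ∧ f 1 = f 2 ∧ f 2 = f 4) ∨
      (f 0 = f 1 ∧ f 1 = f 2 ∧ f 2 = f 3) ∨ (f 0 = f 1 ∧ f 2 = f 3 ∧ f 3 = f 4) ∨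
      (f 0 = f 1 ∧ f 1 = f 2 ∧ f 3 = f 4) then 1 else 2

def ι0 : Fin 5 → Fin 8 := fun t => ⟨t.val, by omega⟩

def cnt (g : Fin 8 → Fin 2) : ℕ :=
  (edges0.toFinset.filter (fun e => ¬ (Sym2.map g e).IsDiag)).card

lemma edgeSet_G0 : G0.edgeSet = ↑edges0.toFinset := Set.ext (fun e => by revert e; decide)

lemma changedEdges_G0 (g : Fin 8 → Fin 2) : changedEdges G0 g = cnt g := by
  unfold changedEdges cnt
  rw [← Set.ncard_coe_finset]
  congr 1
  ext e
  simp [edgeSet_G0]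

set_option maxRecDepth 100000 in
set_option maxHeartbeats 4000000 in
lemma keycomp : ∀ f : Fin 5 → Fin 2,
    (∃ g : Fin 8 → Fin 2, (∀ x, g (ι0 x) = f x) ∧ cnt g = scr f) ∧
    (∀ g : Fin 8 → Fin 2, (∀ x, g (ι0 x) = f x) → scr f ≤ cnt g) := by decide

lemma gScore_G0 (f : Fin 5 → Fin 2) : gScore G0 ι0 f = scr f := by
  obtain ⟨⟨g, hg, hv⟩, h2⟩ := keycomp f
  unfold gScore
  apply le_antisymm
  · exact Nat.sInf_le ⟨g, hg, by rw [changedEdges_G0, hv]⟩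
  · refine le_csInf ⟨changedEdges G0 g, g, hg, rfl⟩ ?_
    rintro n ⟨g', hg', rfl⟩
    rw [changedEdges_G0]
    exact h2 g' hg'

def Sben' : List (Fin 5 → Fin 2) :=
  List.replicate 2 ![0,0,1,1,1] ++ List.replicate 3 ![0,1,0,1,1] ++
  List.replicate 3 ![0,0,1,1,0] ++ List.replicate 3 ![0,0,1,0,1] ++
  List.replicate 4 ![0,0,0,1,1]

lemma Sben'_eq : Sben' = Sben := rfl

def tot (i j k l m : Fin 5) : ℕ := (Sben'.map (fun c => scr (c ∘ ![i,j,k,l,m]))).sum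

set_option maxRecDepth 100000 in
set_option maxHeartbeats 4000000 in
lemma main_comb : ∀ i j k l m : Fin 5, i ≠ j → i ≠ k → i ≠ l → i ≠ m → j ≠ k → j ≠ l → j ≠ m →
    k ≠ l → k ≠ m → l ≠ m → i < j → l < m → i < l →
    24 ≤ tot i j k l m ∨ (tot i j k l m = 23 ∧ i = 0 ∧ j = 2 ∧ k = 1 ∧ l = 3 ∧ m = 4) := by decide

lemma tot_T : tot 0 2 1 3 4 = 23 := by decide

end SbenAux
namespace SbenAux
open SimpleGraph

lemma ncard_nbr {V : Type} (G : SimpleGraph V) [Fintype V] [DecidableRel G.Adj] (v : V) :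
    (G.neighborSet v).ncard = G.degree v := by
  rw [Set.ncard_eq_toFinset_card', Set.toFinset_card]
  exact G.card_neighborSet_eq_degree v

lemma two_le_ncard {V : Type} {s : Set V} {x y : V} (hx : x ∈ s) (hy : y ∈ s) (hxy : x ≠ y)
    (hs : s.Finite) : 2 ≤ s.ncard := by
  have h : ({x, y} : Set V) ⊆ s := by
    intro z hz; rcases hz with rfl | hz
    · exact hx
    · rcases hz with rfl; exact hy
  calc 2 = ({x, y} : Set V).ncard := (Set.ncard_pair hxy).symm
    _ ≤ s.ncard := Set.ncard_le_ncard h hs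

lemma vec8_injective {V : Type} {x0 x1 x2 x3 x4 x5 x6 x7 : V}
    (h01 : x0 ≠ x1) (h02 : x0 ≠ x2) (h03 : x0 ≠ x3) (h04 : x0 ≠ x4) (h05 : x0 ≠ x5)
    (h06 : x0 ≠ x6) (h07 : x0 ≠ x7) (h12 : x1 ≠ x2) (h13 : x1 ≠ x3) (h14 : x1 ≠ x4)
    (h15 : x1 ≠ x5) (h16 : x1 ≠ x6) (h17 : x1 ≠ x7) (h23 : x2 ≠ x3) (h24 : x2 ≠ x4)
    (h25 : x2 ≠ x5) (h26 : x2 ≠ x6) (h27 : x2 ≠ x7) (h34 : x3 ≠ x4) (h35 : x3 ≠ x5)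
    (h36 : x3 ≠ x6) (h37 : x3 ≠ x7) (h45 : x4 ≠ x5) (h46 : x4 ≠ x6) (h47 : x4 ≠ x7)
    (h56 : x5 ≠ x6) (h57 : x5 ≠ x7) (h67 : x6 ≠ x7) :
    Function.Injective ![x0, x1, x2, x3, x4, x5, x6, x7] := by
  intro s t h
  fin_cases s <;> fin_cases t <;>
    first
      | rfl
      | exact absurd h (by assumption)
      | exact absurd h.symm (by assumption)

set_option synthInstance.maxSize 1000 in
lemma G0_class : ∀ u v : Fin 8, G0.Adj u v →
    (u = 0 ∧ v = 5) ∨ (u = 5 ∧ v = 0) ∨ (u = 1 ∧ v = 5) ∨ (u = 5 ∧ v = 1) ∨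
    (u = 5 ∧ v = 6) ∨ (u = 6 ∧ v = 5) ∨ (u = 2 ∧ v = 6) ∨ (u = 6 ∧ v = 2) ∨
    (u = 6 ∧ v = 7) ∨ (u = 7 ∧ v = 6) ∨ (u = 3 ∧ v = 7) ∨ (u = 7 ∧ v = 3) ∨
    (u = 4 ∧ v = 7) ∨ (u = 7 ∧ v = 4) := by decide

lemma determine_core {V : Type} [Fintype V] [DecidableEq V] {G : SimpleGraph V}
    (conn : G.Connected) {x0 x1 x2 x3 x4 a c b : V}
    (hn0 : G.neighborSet x0 = {a}) (hn1 : G.neighborSet x1 = {a})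
    (hn2 : G.neighborSet x2 = {c}) (hn3 : G.neighborSet x3 = {b})
    (hn4 : G.neighborSet x4 = {b}) (hna : G.neighborSet a = {x0, x1, c})
    (hnc : G.neighborSet c = {a, x2, b}) (hnb : G.neighborSet b = {c, x3, x4})
    (hinj : Function.Injective ![x0, x1, x2, x3, x4, a, c, b]) :
    ∃ ψ : Fin 8 ≃ V, (∀ u v : Fin 8, G.Adj (ψ u) (ψ v) ↔ G0.Adj u v) ∧
      (∀ t : Fin 8, ψ t = ![x0, x1, x2, x3, x4, a, c, b] t) := by
  have hsurj : Function.Surjective ![x0, x1, x2, x3, x4, a, c, b] := by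
    have hS : ∀ u w : V, u ∈ Set.range ![x0, x1, x2, x3, x4, a, c, b] → G.Adj u w →
        w ∈ Set.range ![x0, x1, x2, x3, x4, a, c, b] := by
      rintro u w ⟨t, rfl⟩ huw
      fin_cases t
      · have hw : w ∈ G.neighborSet x0 := huw
        rw [hn0] at hw
        have hw2 : w = a := hw
        exact ⟨5, hw2.symm⟩
      · have hw : w ∈ G.neighborSet x1 := huw
        rw [hn1] at hw
        exact ⟨5, (show w = a from hw).symm⟩
      · have hw : w ∈ G.neighborSet x2 := huw
        rw [hn2] at hw
        exact ⟨6, (show w = c from hw).symm⟩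
      · have hw : w ∈ G.neighborSet x3 := huw
        rw [hn3] at hw
        exact ⟨7, (show w = b from hw).symm⟩
      · have hw : w ∈ G.neighborSet x4 := huw
        rw [hn4] at hw
        exact ⟨7, (show w = b from hw).symm⟩
      · have hw : w ∈ G.neighborSet a := huw
        rw [hna] at hw
        simp only [Set.mem_insert_iff, Set.mem_singleton_iff] at hw
        rcases hw with rfl | rfl | rfl
        · exact ⟨0, rfl⟩
        · exact ⟨1, rfl⟩
        · exact ⟨6, rfl⟩
      · have hw : w ∈ G.neighborSet c := huw
        rw [hnc] at hw
        simp only [Set.mem_insert_iff, Set.mem_singleton_iff] at hw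
        rcases hw with rfl | rfl | rfl
        · exact ⟨5, rfl⟩
        · exact ⟨2, rfl⟩
        · exact ⟨7, rfl⟩
      · have hw : w ∈ G.neighborSet b := huw
        rw [hnb] at hw
        simp only [Set.mem_insert_iff, Set.mem_singleton_iff] at hw
        rcases hw with rfl | rfl | rfl
        · exact ⟨6, rfl⟩
        · exact ⟨3, rfl⟩
        · exact ⟨4, rfl⟩
    intro v
    exact reach_mem hS (conn.preconnected a v) ⟨5, rfl⟩
  -- basic adjacencies
  have A05 : G.Adj x0 a := by
    have : a ∈ G.neighborSet x0 := by rw [hn0]; exact rfl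
    exact this
  have A15 : G.Adj x1 a := by
    have : a ∈ G.neighborSet x1 := by rw [hn1]; exact rfl
    exact this
  have A26 : G.Adj x2 c := by
    have : c ∈ G.neighborSet x2 := by rw [hn2]; exact rfl
    exact this
  have A37 : G.Adj x3 b := by
    have : b ∈ G.neighborSet x3 := by rw [hn3]; exact rfl
    exact this
  have A47 : G.Adj x4 b := by
    have : b ∈ G.neighborSet x4 := by rw [hn4]; exact rfl
    exact this
  have A56 : G.Adj a c := by
    have : c ∈ G.neighborSet a := by rw [hna]; right; right; exact rfl
    exact this
  have A67 : G.Adj c b := by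
    have : b ∈ G.neighborSet c := by rw [hnc]; right; right; exact rfl
    exact this
  -- inverse identifications
  have e0 : ∀ v : Fin 8, ![x0, x1, x2, x3, x4, a, c, b] v = x0 → v = 0 :=
    fun v h => hinj (show _ = ![x0, x1, x2, x3, x4, a, c, b] 0 from h)
  have e1 : ∀ v : Fin 8, ![x0, x1, x2, x3, x4, a, c, b] v = x1 → v = 1 :=
    fun v h => hinj (show _ = ![x0, x1, x2, x3, x4, a, c, b] 1 from h)
  have e2 : ∀ v : Fin 8, ![x0, x1, x2, x3, x4, a, c, b] v = x2 → v = 2 :=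
    fun v h => hinj (show _ = ![x0, x1, x2, x3, x4, a, c, b] 2 from h)
  have e3 : ∀ v : Fin 8, ![x0, x1, x2, x3, x4, a, c, b] v = x3 → v = 3 :=
    fun v h => hinj (show _ = ![x0, x1, x2, x3, x4, a, c, b] 3 from h)
  have e4 : ∀ v : Fin 8, ![x0, x1, x2, x3, x4, a, c, b] v = x4 → v = 4 :=
    fun v h => hinj (show _ = ![x0, x1, x2, x3, x4, a, c, b] 4 from h)
  have e5 : ∀ v : Fin 8, ![x0, x1, x2, x3, x4, a, c, b] v = a → v = 5 :=
    fun v h => hinj (show _ = ![x0, x1, x2, x3, x4, a, c, b] 5 from h)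
  have e6 : ∀ v : Fin 8, ![x0, x1, x2, x3, x4, a, c, b] v = c → v = 6 :=
    fun v h => hinj (show _ = ![x0, x1, x2, x3, x4, a, c, b] 6 from h)
  have e7 : ∀ v : Fin 8, ![x0, x1, x2, x3, x4, a, c, b] v = b → v = 7 :=
    fun v h => hinj (show _ = ![x0, x1, x2, x3, x4, a, c, b] 7 from h)
  have fwd : ∀ u v : Fin 8, G.Adj (![x0, x1, x2, x3, x4, a, c, b] u)
      (![x0, x1, x2, x3, x4, a, c, b] v) → G0.Adj u v := by
    intro u v huv
    fin_cases u
    · have hw : ![x0, x1, x2, x3, x4, a, c, b] v ∈ G.neighborSet x0 := huv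
      rw [hn0] at hw
      have := e5 v hw; subst this; decide
    · have hw : ![x0, x1, x2, x3, x4, a, c, b] v ∈ G.neighborSet x1 := huv
      rw [hn1] at hw
      have := e5 v hw; subst this; decide
    · have hw : ![x0, x1, x2, x3, x4, a, c, b] v ∈ G.neighborSet x2 := huv
      rw [hn2] at hw
      have := e6 v hw; subst this; decide
    · have hw : ![x0, x1, x2, x3, x4, a, c, b] v ∈ G.neighborSet x3 := huv
      rw [hn3] at hw
      have := e7 v hw; subst this; decide
    · have hw : ![x0, x1, x2, x3, x4, a, c, b] v ∈ G.neighborSet x4 := huv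
      rw [hn4] at hw
      have := e7 v hw; subst this; decide
    · have hw : ![x0, x1, x2, x3, x4, a, c, b] v ∈ G.neighborSet a := huv
      rw [hna] at hw
      simp only [Set.mem_insert_iff, Set.mem_singleton_iff] at hw
      rcases hw with h | h | h
      · have := e0 v h; subst this; decide
      · have := e1 v h; subst this; decide
      · have := e6 v h; subst this; decide
    · have hw : ![x0, x1, x2, x3, x4, a, c, b] v ∈ G.neighborSet c := huv
      rw [hnc] at hw
      simp only [Set.mem_insert_iff, Set.mem_singleton_iff] at hw
      rcases hw with h | h | h
      · have := e5 v h; subst this; decide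
      · have := e2 v h; subst this; decide
      · have := e7 v h; subst this; decide
    · have hw : ![x0, x1, x2, x3, x4, a, c, b] v ∈ G.neighborSet b := huv
      rw [hnb] at hw
      simp only [Set.mem_insert_iff, Set.mem_singleton_iff] at hw
      rcases hw with h | h | h
      · have := e6 v h; subst this; decide
      · have := e3 v h; subst this; decide
      · have := e4 v h; subst this; decide
  have bwd : ∀ u v : Fin 8, G0.Adj u v →
      G.Adj (![x0, x1, x2, x3, x4, a, c, b] u) (![x0, x1, x2, x3, x4, a, c, b] v) := by
    intro u v h0
    rcases G0_class u v h0 with ⟨hu, hv⟩ | ⟨hu, hv⟩ | ⟨hu, hv⟩ | ⟨hu, hv⟩ | ⟨hu, hv⟩ |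
      ⟨hu, hv⟩ | ⟨hu, hv⟩ | ⟨hu, hv⟩ | ⟨hu, hv⟩ | ⟨hu, hv⟩ | ⟨hu, hv⟩ | ⟨hu, hv⟩ |
      ⟨hu, hv⟩ | ⟨hu, hv⟩ <;> subst hu <;> subst hv
    · exact A05
    · exact A05.symm
    · exact A15
    · exact A15.symm
    · exact A56
    · exact A56.symm
    · exact A26
    · exact A26.symm
    · exact A67
    · exact A67.symm
    · exact A37
    · exact A37.symm
    · exact A47
    · exact A47.symm
  refine ⟨Equiv.ofBijective _ ⟨hinj, hsurj⟩, fun u v => ⟨fwd u v, bwd u v⟩, fun t => rfl⟩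

end SbenAux
namespace SbenAux
open SimpleGraph

lemma determine (T : PhyloTree (Fin 5)) [Fintype T.V] [DecidableEq T.V] (i j k l m : Fin 5)
    (hinj5 : Function.Injective ![i, j, k, l, m]) (hc : T.Cat5 i j k l m) :
    ∃ ψ : Fin 8 ≃ T.V, (∀ u v : Fin 8, T.G.Adj (ψ u) (ψ v) ↔ G0.Adj u v) ∧
      (∀ t : Fin 5, ψ (ι0 t) = T.ι (![i, j, k, l, m] t)) := by
  obtain ⟨a, c, b, h1, h2, h3, h4, h5, h6, h7⟩ := hc
  have hfin : ∀ s : Set T.V, s.Finite := fun s => s.toFinite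
  have hne5 : ∀ s t : Fin 5, s ≠ t → ![i,j,k,l,m] s ≠ ![i,j,k,l,m] t :=
    fun s t h hh => h (hinj5 hh)
  have hij : i ≠ j := hne5 0 1 (by decide)
  have hik : i ≠ k := hne5 0 2 (by decide)
  have hil : i ≠ l := hne5 0 3 (by decide)
  have him : i ≠ m := hne5 0 4 (by decide)
  have hjk : j ≠ k := hne5 1 2 (by decide)
  have hjl : j ≠ l := hne5 1 3 (by decide)
  have hjm : j ≠ m := hne5 1 4 (by decide)
  have hkl : k ≠ l := hne5 2 3 (by decide)
  have hkm : k ≠ m := hne5 2 4 (by decide)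
  have hlm : l ≠ m := hne5 3 4 (by decide)
  have leafne : ∀ x y : Fin 5, x ≠ y → T.ι x ≠ T.ι y := fun x y h hh => h (T.inj hh)
  have ha_int : a ∉ Set.range T.ι := by
    rintro ⟨x, rfl⟩
    have h1' : T.ι i ∈ T.G.neighborSet (T.ι x) := h1.symm
    have h2' : T.ι j ∈ T.G.neighborSet (T.ι x) := h2.symm
    have := two_le_ncard h1' h2' (leafne i j hij) (hfin _)
    rw [T.leafDeg x] at this; omega
  have hb_int : b ∉ Set.range T.ι := by
    rintro ⟨x, rfl⟩
    have h6' : T.ι l ∈ T.G.neighborSet (T.ι x) := h6.symm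
    have h7' : T.ι m ∈ T.G.neighborSet (T.ι x) := h7.symm
    have := two_le_ncard h6' h7' (leafne l m hlm) (hfin _)
    rw [T.leafDeg x] at this; omega
  have hla : ∀ x, T.ι x ≠ a := fun x h => ha_int ⟨x, h⟩
  have hlb : ∀ x, T.ι x ≠ b := fun x h => hb_int ⟨x, h⟩
  have hdega : (T.G.neighborSet a).ncard = 3 := T.innerDeg a ha_int
  have hdegb : (T.G.neighborSet b).ncard = 3 := T.innerDeg b hb_int
  have hab : a ≠ b := by
    rintro rfl
    have hsub : ({T.ι i, T.ι j, T.ι l, T.ι m} : Set T.V) ⊆ T.G.neighborSet a := by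
      intro z hz
      rcases hz with rfl | rfl | rfl | rfl
      · exact h1.symm
      · exact h2.symm
      · exact h6.symm
      · exact h7.symm
    have hc4 : ({T.ι i, T.ι j, T.ι l, T.ι m} : Set T.V).ncard = 4 := by
      rw [Set.ncard_insert_of_notMem
          (by simp [leafne i j hij, leafne i l hil, leafne i m him]) (hfin _),
        Set.ncard_insert_of_notMem (by simp [leafne j l hjl, leafne j m hjm]) (hfin _),
        Set.ncard_pair (leafne l m hlm)]
    have := Set.ncard_le_ncard hsub (hfin _)
    rw [hdega, hc4] at this; omega
  have hc_int : c ∉ Set.range T.ι := by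
    rintro ⟨x, rfl⟩
    have s1 : a ∈ T.G.neighborSet (T.ι x) := h3.symm
    have s2 : b ∈ T.G.neighborSet (T.ι x) := h5
    have := two_le_ncard s1 s2 hab (hfin _)
    rw [T.leafDeg x] at this; omega
  have hlc : ∀ x, T.ι x ≠ c := fun x h => hc_int ⟨x, h⟩
  have hdegc : (T.G.neighborSet c).ncard = 3 := T.innerDeg c hc_int
  have hac : a ≠ c := h3.ne
  have hcb : c ≠ b := h5.ne
  have hna : T.G.neighborSet a = {T.ι i, T.ι j, c} := by
    symm
    apply Set.eq_of_subset_of_ncard_le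
    · intro z hz
      rcases hz with rfl | rfl | rfl
      · exact h1.symm
      · exact h2.symm
      · exact h3
    · rw [hdega, Set.ncard_insert_of_notMem (by simp [leafne i j hij, hlc i]) (hfin _),
        Set.ncard_pair (hlc j)]
    · exact hfin _
  have hnb : T.G.neighborSet b = {c, T.ι l, T.ι m} := by
    symm
    apply Set.eq_of_subset_of_ncard_le
    · intro z hz
      rcases hz with rfl | rfl | rfl
      · exact h5.symm
      · exact h6.symm
      · exact h7.symm
    · rw [hdegb, Set.ncard_insert_of_notMem
          (by simp [(hlc l).symm, (hlc m).symm]) (hfin _),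
        Set.ncard_pair (leafne l m hlm)]
    · exact hfin _
  have hnc : T.G.neighborSet c = {a, T.ι k, b} := by
    symm
    apply Set.eq_of_subset_of_ncard_le
    · intro z hz
      rcases hz with rfl | rfl | rfl
      · exact h3.symm
      · exact h4.symm
      · exact h5
    · rw [hdegc, Set.ncard_insert_of_notMem (by simp [(hla k).symm, hab]) (hfin _),
        Set.ncard_pair (hlb k)]
    · exact hfin _
  have hleafnbr : ∀ (x : Fin 5) (w : T.V), T.G.Adj (T.ι x) w →
      T.G.neighborSet (T.ι x) = {w} := by
    intro x w hw
    obtain ⟨z, hz⟩ := Set.ncard_eq_one.1 (T.leafDeg x)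
    have hmem : w ∈ T.G.neighborSet (T.ι x) := hw
    rw [hz] at hmem ⊢
    rw [Set.mem_singleton_iff] at hmem
    rw [hmem]
  have hni : T.G.neighborSet (T.ι i) = {a} := hleafnbr i a h1
  have hnj : T.G.neighborSet (T.ι j) = {a} := hleafnbr j a h2
  have hnk : T.G.neighborSet (T.ι k) = {c} := hleafnbr k c h4
  have hnl : T.G.neighborSet (T.ι l) = {b} := hleafnbr l b h6
  have hnm : T.G.neighborSet (T.ι m) = {b} := hleafnbr m b h7
  have hinj8 : Function.Injective ![T.ι i, T.ι j, T.ι k, T.ι l, T.ι m, a, c, b] :=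
    vec8_injective (leafne i j hij) (leafne i k hik) (leafne i l hil) (leafne i m him)
      (hla i) (hlc i) (hlb i) (leafne j k hjk) (leafne j l hjl) (leafne j m hjm)
      (hla j) (hlc j) (hlb j) (leafne k l hkl) (leafne k m hkm) (hla k) (hlc k) (hlb k)
      (leafne l m hlm) (hla l) (hlc l) (hlb l) (hla m) (hlc m) (hlb m) hac hab hcb
  obtain ⟨ψ, hψadj, hψval⟩ := determine_core T.conn hni hnj hnk hnl hnm hna hnc hnb hinj8
  refine ⟨ψ, hψadj, ?_⟩
  intro t
  fin_cases t
  · exact hψval 0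
  · exact hψval 1
  · exact hψval 2
  · exact hψval 3
  · exact hψval 4

end SbenAux
namespace SbenAux
open SimpleGraph

lemma vec5_injective {x0 x1 x2 x3 x4 : Fin 5}
    (h01 : x0 ≠ x1) (h02 : x0 ≠ x2) (h03 : x0 ≠ x3) (h04 : x0 ≠ x4)
    (h12 : x1 ≠ x2) (h13 : x1 ≠ x3) (h14 : x1 ≠ x4) (h23 : x2 ≠ x3) (h24 : x2 ≠ x4)
    (h34 : x3 ≠ x4) : Function.Injective ![x0, x1, x2, x3, x4] := by
  intro s t h
  fin_cases s <;> fin_cases t <;>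
    first
      | rfl
      | exact absurd h (by assumption)
      | exact absurd h.symm (by assumption)

lemma cat5_swap12 {T : PhyloTree (Fin 5)} {i j k l m : Fin 5} (h : T.Cat5 i j k l m) :
    T.Cat5 j i k l m := by
  obtain ⟨a, c, b, h1, h2, h3, h4, h5, h6, h7⟩ := h
  exact ⟨a, c, b, h2, h1, h3, h4, h5, h6, h7⟩

lemma cat5_swap45 {T : PhyloTree (Fin 5)} {i j k l m : Fin 5} (h : T.Cat5 i j k l m) :
    T.Cat5 i j k m l := by
  obtain ⟨a, c, b, h1, h2, h3, h4, h5, h6, h7⟩ := h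
  exact ⟨a, c, b, h1, h2, h3, h4, h5, h7, h6⟩

lemma cat5_rev {T : PhyloTree (Fin 5)} {i j k l m : Fin 5} (h : T.Cat5 i j k l m) :
    T.Cat5 l m k i j := by
  obtain ⟨a, c, b, h1, h2, h3, h4, h5, h6, h7⟩ := h
  exact ⟨b, c, a, h6, h7, h5.symm, h4, h3.symm, h1, h2⟩

/-- Normalization of a caterpillar tuple. -/
lemma normalize {T : PhyloTree (Fin 5)} {i j k l m : Fin 5}
    (hij : i ≠ j) (hik : i ≠ k) (hil : i ≠ l) (him : i ≠ m) (hjk : j ≠ k) (hjl : j ≠ l)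
    (hjm : j ≠ m) (hkl : k ≠ l) (hkm : k ≠ m) (hlm : l ≠ m) (hc : T.Cat5 i j k l m) :
    ∃ i' j' k' l' m' : Fin 5, Function.Injective ![i', j', k', l', m'] ∧
      i' < j' ∧ l' < m' ∧ i' < l' ∧ T.Cat5 i' j' k' l' m' := by
  -- first sort the pairs
  have main : ∀ i j k l m : Fin 5, i ≠ j → i ≠ k → i ≠ l → i ≠ m → j ≠ k → j ≠ l →
      j ≠ m → k ≠ l → k ≠ m → l ≠ m → i < j → l < m → T.Cat5 i j k l m →
      ∃ i' j' k' l' m' : Fin 5, Function.Injective ![i', j', k', l', m'] ∧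
        i' < j' ∧ l' < m' ∧ i' < l' ∧ T.Cat5 i' j' k' l' m' := by
    intro i j k l m hij hik hil him hjk hjl hjm hkl hkm hlm hij' hlm' hc
    rcases hil.lt_or_gt with h | h
    · exact ⟨i, j, k, l, m, vec5_injective hij hik hil him hjk hjl hjm hkl hkm hlm,
        hij', hlm', h, hc⟩
    · exact ⟨l, m, k, i, j, vec5_injective hlm hkl.symm hil.symm hjl.symm hkm.symm
        him.symm hjm.symm hik.symm hjk.symm hij, hlm', hij', h, cat5_rev hc⟩
  have sorted45 : ∀ i j k l m : Fin 5, i ≠ j → i ≠ k → i ≠ l → i ≠ m → j ≠ k → j ≠ l →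
      j ≠ m → k ≠ l → k ≠ m → l ≠ m → i < j → T.Cat5 i j k l m →
      ∃ i' j' k' l' m' : Fin 5, Function.Injective ![i', j', k', l', m'] ∧
        i' < j' ∧ l' < m' ∧ i' < l' ∧ T.Cat5 i' j' k' l' m' := by
    intro i j k l m hij hik hil him hjk hjl hjm hkl hkm hlm hij' hc
    rcases hlm.lt_or_gt with h | h
    · exact main i j k l m hij hik hil him hjk hjl hjm hkl hkm hlm hij' h hc
    · exact main i j k m l hij hik him hil hjk hjm hjl hkm hkl hlm.symm hij' h
        (cat5_swap45 hc)
  rcases hij.lt_or_gt with h | h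
  · exact sorted45 i j k l m hij hik hil him hjk hjl hjm hkl hkm hlm h hc
  · exact sorted45 j i k l m hij.symm hjk hjl hjm hik hil him hkl hkm hlm h (cat5_swap12 hc)

end SbenAux
namespace SbenAux
open SimpleGraph Finset

set_option maxHeartbeats 2000000 in
lemma structure5 (T : PhyloTree (Fin 5)) [Fintype T.V] [DecidableEq T.V]
    [DecidableRel T.G.Adj] :
    ∃ i j k l m : Fin 5, Function.Injective ![i, j, k, l, m] ∧
      i < j ∧ l < m ∧ i < l ∧ T.Cat5 i j k l m := by
  classical
  have htree : T.G.IsTree := ⟨T.conn, T.acyc⟩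
  have hE : T.G.edgeFinset.card + 1 = Fintype.card T.V := htree.card_edgeFinset
  have hHS : ∑ v, T.G.degree v = 2 * T.G.edgeFinset.card :=
    T.G.sum_degrees_eq_twice_card_edges
  have hdeg_leaf : ∀ x : Fin 5, T.G.degree (T.ι x) = 1 := by
    intro x; rw [← ncard_nbr]; exact T.leafDeg x
  have hdeg_int : ∀ v, v ∉ Set.range T.ι → T.G.degree v = 3 := by
    intro v hv; rw [← ncard_nbr]; exact T.innerDeg v hv
  set LF : Finset T.V := Finset.univ.image T.ι with hLF
  have hmemLF : ∀ v, v ∈ LF ↔ v ∈ Set.range T.ι := by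
    intro v; simp [hLF, Set.mem_range]
  have hLFcard : LF.card = 5 := by
    rw [hLF, Finset.card_image_of_injective _ T.inj]; simp
  have hsumLF : ∑ v ∈ LF, T.G.degree v = 5 := by
    rw [hLF, Finset.sum_image (fun x _ y _ h => T.inj h)]
    simp [hdeg_leaf]
  have hsumIF : ∑ v ∈ LFᶜ, T.G.degree v = 3 * LFᶜ.card := by
    rw [Finset.sum_congr rfl (fun v hv => hdeg_int v (by
      rw [Finset.mem_compl, hmemLF] at hv; exact hv))]
    simp [Finset.sum_const, Nat.mul_comm]
  have hcards : LF.card + LFᶜ.card = Fintype.card T.V := LF.card_add_card_compl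
  have htotal : ∑ v ∈ LFᶜ, T.G.degree v + ∑ v ∈ LF, T.G.degree v = ∑ v, T.G.degree v :=
    Finset.sum_compl_add_sum LF _
  have hIcard : LFᶜ.card = 3 := by omega
  have hncardV : (Set.univ : Set T.V).ncard = 8 := by
    rw [Set.ncard_univ, Nat.card_eq_fintype_card]; omega
  -- each leaf's unique neighbour is internal
  have hleafnbr : ∀ (x : Fin 5) (w : T.V), T.G.Adj (T.ι x) w →
      T.G.neighborSet (T.ι x) = {w} := by
    intro x w hw
    obtain ⟨z, hz⟩ := Set.ncard_eq_one.1 (T.leafDeg x)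
    have hmem : w ∈ T.G.neighborSet (T.ι x) := hw
    rw [hz] at hmem ⊢
    rw [Set.mem_singleton_iff] at hmem
    rw [hmem]
  have hLN : ∀ (x : Fin 5) (u : T.V), T.G.Adj (T.ι x) u → u ∉ Set.range T.ι := by
    rintro x u hadj ⟨y, rfl⟩
    have hnx : T.G.neighborSet (T.ι x) = {T.ι y} := hleafnbr x _ hadj
    have hny : T.G.neighborSet (T.ι y) = {T.ι x} := hleafnbr y _ hadj.symm
    have hS : ∀ u' v' : T.V, u' ∈ ({T.ι x, T.ι y} : Set T.V) → T.G.Adj u' v' →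
        v' ∈ ({T.ι x, T.ι y} : Set T.V) := by
      rintro u' v' (rfl | hu) hadj'
      · right
        have : v' ∈ T.G.neighborSet (T.ι x) := hadj'
        rw [hnx] at this; exact this
      · rw [Set.mem_singleton_iff] at hu; subst hu
        left
        have : v' ∈ T.G.neighborSet (T.ι y) := hadj'
        rw [hny] at this; rw [Set.mem_singleton_iff] at this; rw [this]
    have hall : ∀ v, v ∈ ({T.ι x, T.ι y} : Set T.V) :=
      fun v => reach_mem hS (T.conn.preconnected (T.ι x) v) (by left; rfl)
    have hsub : (Set.univ : Set T.V) ⊆ {T.ι x, T.ι y} := fun v _ => hall v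
    have := Set.ncard_le_ncard hsub (Set.toFinite _)
    have h2 : ({T.ι x, T.ι y} : Set T.V).ncard ≤ 2 :=
      le_trans (Set.ncard_insert_le _ _) (by simp)
    omega
  -- double counting of leaf edges
  have hinner : ∀ x ∈ LF, (LFᶜ.filter (fun v => T.G.Adj v x)).card = 1 := by
    intro x hx
    rw [hmemLF] at hx
    obtain ⟨y, rfl⟩ := hx
    obtain ⟨z, hz⟩ := Set.ncard_eq_one.1 (T.leafDeg y)
    have hadj_z : T.G.Adj (T.ι y) z := by
      have : z ∈ T.G.neighborSet (T.ι y) := by rw [hz]; rfl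
      exact this
    have : LFᶜ.filter (fun v => T.G.Adj v (T.ι y)) = {z} := by
      ext v
      simp only [Finset.mem_filter, Finset.mem_compl, Finset.mem_singleton, hmemLF]
      constructor
      · rintro ⟨hv1, hv2⟩
        have : v ∈ T.G.neighborSet (T.ι y) := hv2.symm
        rw [hz] at this; exact this
      · rintro rfl
        exact ⟨hLN y _ hadj_z, hadj_z.symm⟩
    rw [this]; rfl
  have h5sum : ∑ v ∈ LFᶜ, (LF.filter (T.G.Adj v)).card = 5 := by
    have : ∀ v, (LF.filter (T.G.Adj v)).card = ∑ x ∈ LF, if T.G.Adj v x then 1 else 0 :=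
      fun v => Finset.card_filter _ _
    rw [Finset.sum_congr rfl (fun v _ => this v), Finset.sum_comm]
    rw [Finset.sum_congr rfl (fun x hx => (Finset.card_filter _ _).symm)]
    rw [Finset.sum_congr rfl hinner]
    simp [hLFcard]
  have hsplitdeg : ∀ v, (LF.filter (T.G.Adj v)).card + (LFᶜ.filter (T.G.Adj v)).card
      = T.G.degree v := by
    intro v
    rw [SimpleGraph.degree, neighborFinset_eq_filter]
    rw [← Finset.card_union_of_disjoint
      (Finset.disjoint_filter_filter disjoint_compl_right)]
    congr 1
    rw [← Finset.filter_union, Finset.union_compl]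
  have hId_le : ∀ v ∈ LFᶜ, (LFᶜ.filter (T.G.Adj v)).card ≤ 2 := by
    intro v hv
    have hsub : LFᶜ.filter (T.G.Adj v) ⊆ LFᶜ.erase v := by
      intro w hw
      rw [Finset.mem_filter] at hw
      exact Finset.mem_erase.2 ⟨hw.2.ne', hw.1⟩
    have := Finset.card_le_card hsub
    rw [Finset.card_erase_of_mem hv, hIcard] at this
    omega
  have hId_ge : ∀ v ∈ LFᶜ, 1 ≤ (LFᶜ.filter (T.G.Adj v)).card := by
    intro v hv
    by_contra hcon
    push_neg at hcon
    have hempty : LFᶜ.filter (T.G.Adj v) = ∅ := Finset.card_eq_zero.1 (by omega)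
    have hnoint : ∀ w, T.G.Adj v w → w ∈ Set.range T.ι := by
      intro w hw
      by_contra hwint
      have : w ∈ LFᶜ.filter (T.G.Adj v) := by
        rw [Finset.mem_filter, Finset.mem_compl, hmemLF]
        exact ⟨hwint, hw⟩
      rw [hempty] at this
      exact absurd this (Finset.notMem_empty w)
    have hvint : v ∉ Set.range T.ι := by rw [← hmemLF, ← Finset.mem_compl]; exact hv
    have hS : ∀ u' v' : T.V, u' ∈ insert v (T.G.neighborSet v) → T.G.Adj u' v' →
        v' ∈ insert v (T.G.neighborSet v) := by
      rintro u' v' (rfl | hu) hadj'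
      · right; exact hadj'
      · obtain ⟨y, rfl⟩ := hnoint u' hu
        have : T.G.neighborSet (T.ι y) = {v} := hleafnbr y v (show T.G.Adj v (T.ι y) from hu).symm
        have hv' : v' ∈ T.G.neighborSet (T.ι y) := hadj'
        rw [this, Set.mem_singleton_iff] at hv'
        left; exact hv'
    have hall : ∀ w, w ∈ insert v (T.G.neighborSet v) :=
      fun w => reach_mem hS (T.conn.preconnected v w) (by left; rfl)
    have hsub : (Set.univ : Set T.V) ⊆ insert v (T.G.neighborSet v) := fun w _ => hall w
    have hle := Set.ncard_le_ncard hsub (Set.toFinite _)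
    have h4 : (insert v (T.G.neighborSet v)).ncard ≤ 4 := by
      refine le_trans (Set.ncard_insert_le _ _) ?_
      rw [T.innerDeg v hvint]
    omega
  -- extract the three internal vertices
  obtain ⟨p, q, r, hpq, hpr, hqr, hIeq⟩ := Finset.card_eq_three.1 hIcard
  have hsum9 : ∑ v ∈ LFᶜ, T.G.degree v = 9 := by rw [hsumIF, hIcard]
  have hsumsplit : ∑ v ∈ LFᶜ, ((LF.filter (T.G.Adj v)).card
      + (LFᶜ.filter (T.G.Adj v)).card) = 9 := by
    rw [Finset.sum_congr rfl (fun v _ => hsplitdeg v)]; exact hsum9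
  have hsum4 : ∑ v ∈ LFᶜ, (LFᶜ.filter (T.G.Adj v)).card = 4 := by
    rw [Finset.sum_add_distrib] at hsumsplit
    omega
  have hpmem : p ∈ LFᶜ := by rw [hIeq]; simp
  have hqmem : q ∈ LFᶜ := by rw [hIeq]; simp
  have hrmem : r ∈ LFᶜ := by rw [hIeq]; simp
  have hsum_pqr : (LFᶜ.filter (T.G.Adj p)).card + (LFᶜ.filter (T.G.Adj q)).card
      + (LFᶜ.filter (T.G.Adj r)).card = 4 := by
    rw [hIeq] at hsum4
    rw [Finset.sum_insert (by simp [hpq, hpr]), Finset.sum_insert (by simp [hqr]),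
      Finset.sum_singleton] at hsum4
    rw [← hIeq] at hsum4
    omega
  -- helper constructing the caterpillar given the middle internal vertex
  have build : ∀ w u₁ u₂ : T.V, w ≠ u₁ → w ≠ u₂ → u₁ ≠ u₂ → LFᶜ = {w, u₁, u₂} →
      (LFᶜ.filter (T.G.Adj w)).card = 2 → (LFᶜ.filter (T.G.Adj u₁)).card = 1 →
      (LFᶜ.filter (T.G.Adj u₂)).card = 1 →
      ∃ i j k l m : Fin 5, Function.Injective ![i, j, k, l, m] ∧
        i < j ∧ l < m ∧ i < l ∧ T.Cat5 i j k l m := by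
    intro w u₁ u₂ hwu1 hwu2 hu12 hIeq' hIw hIu1 hIu2
    have hwmem : w ∈ LFᶜ := by rw [hIeq']; simp
    have hu1mem : u₁ ∈ LFᶜ := by rw [hIeq']; simp
    have hu2mem : u₂ ∈ LFᶜ := by rw [hIeq']; simp
    have hw_int : w ∉ Set.range T.ι := by rw [← hmemLF, ← Finset.mem_compl]; exact hwmem
    have hu1_int : u₁ ∉ Set.range T.ι := by rw [← hmemLF, ← Finset.mem_compl]; exact hu1mem
    have hu2_int : u₂ ∉ Set.range T.ι := by rw [← hmemLF, ← Finset.mem_compl]; exact hu2mem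
    -- the middle vertex is adjacent to both others
    have hfw : LFᶜ.filter (T.G.Adj w) = {u₁, u₂} := by
      apply Finset.eq_of_subset_of_card_le
      · intro v hv
        rw [Finset.mem_filter, hIeq'] at hv
        obtain ⟨hv1, hv2⟩ := hv
        simp only [Finset.mem_insert, Finset.mem_singleton] at hv1 ⊢
        rcases hv1 with rfl | h
        · exact absurd rfl hv2.ne'
        · exact h
      · rw [hIw, Finset.card_insert_of_notMem (by simp [hu12]), Finset.card_singleton]
    have hAdj_w_u1 : T.G.Adj w u₁ := by
      have : u₁ ∈ LFᶜ.filter (T.G.Adj w) := by rw [hfw]; simp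
      exact (Finset.mem_filter.1 this).2
    have hAdj_w_u2 : T.G.Adj w u₂ := by
      have : u₂ ∈ LFᶜ.filter (T.G.Adj w) := by rw [hfw]; simp
      exact (Finset.mem_filter.1 this).2
    -- leaf counts
    have hLw : (LF.filter (T.G.Adj w)).card = 1 := by
      have := hsplitdeg w
      rw [hIw, hdeg_int w hw_int] at this; omega
    have hLu1 : (LF.filter (T.G.Adj u₁)).card = 2 := by
      have := hsplitdeg u₁
      rw [hIu1, hdeg_int u₁ hu1_int] at this; omega
    have hLu2 : (LF.filter (T.G.Adj u₂)).card = 2 := by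
      have := hsplitdeg u₂
      rw [hIu2, hdeg_int u₂ hu2_int] at this; omega
    obtain ⟨xk, hxk⟩ := Finset.card_eq_one.1 hLw
    obtain ⟨xi, xj, hxij, hxij'⟩ := Finset.card_eq_two.1 hLu1
    obtain ⟨xl, xm, hxlm, hxlm'⟩ := Finset.card_eq_two.1 hLu2
    have hxk_mem : xk ∈ LF ∧ T.G.Adj w xk := by
      have : xk ∈ LF.filter (T.G.Adj w) := by rw [hxk]; simp
      exact Finset.mem_filter.1 this
    have hxi_mem : xi ∈ LF ∧ T.G.Adj u₁ xi := by
      have : xi ∈ LF.filter (T.G.Adj u₁) := by rw [hxij']; simp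
      exact Finset.mem_filter.1 this
    have hxj_mem : xj ∈ LF ∧ T.G.Adj u₁ xj := by
      have : xj ∈ LF.filter (T.G.Adj u₁) := by rw [hxij']; simp
      exact Finset.mem_filter.1 this
    have hxl_mem : xl ∈ LF ∧ T.G.Adj u₂ xl := by
      have : xl ∈ LF.filter (T.G.Adj u₂) := by rw [hxlm']; simp
      exact Finset.mem_filter.1 this
    have hxm_mem : xm ∈ LF ∧ T.G.Adj u₂ xm := by
      have : xm ∈ LF.filter (T.G.Adj u₂) := by rw [hxlm']; simp
      exact Finset.mem_filter.1 this
    obtain ⟨k, hk⟩ : ∃ k, T.ι k = xk := by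
      have := (hmemLF xk).1 hxk_mem.1; exact this
    obtain ⟨i, hi⟩ : ∃ i, T.ι i = xi := by
      have := (hmemLF xi).1 hxi_mem.1; exact this
    obtain ⟨j, hj⟩ : ∃ j, T.ι j = xj := by
      have := (hmemLF xj).1 hxj_mem.1; exact this
    obtain ⟨l, hl⟩ : ∃ l, T.ι l = xl := by
      have := (hmemLF xl).1 hxl_mem.1; exact this
    obtain ⟨m, hm⟩ : ∃ m, T.ι m = xm := by
      have := (hmemLF xm).1 hxm_mem.1; exact this
    subst hk; subst hi; subst hj; subst hl; subst hm
    -- distinctness of taxa: a leaf cannot be adjacent to two distinct internal vertices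
    have uniq : ∀ (x : Fin 5) (v v' : T.V), T.G.Adj v (T.ι x) → T.G.Adj v' (T.ι x) →
        v = v' := by
      intro x v v' h h'
      have h1 : v ∈ T.G.neighborSet (T.ι x) := h.symm
      have h2 : v' ∈ T.G.neighborSet (T.ι x) := h'.symm
      obtain ⟨z, hz⟩ := Set.ncard_eq_one.1 (T.leafDeg x)
      rw [hz, Set.mem_singleton_iff] at h1 h2
      rw [h1, h2]
    have hik : i ≠ k := fun h => hwu1 (uniq k w u₁ hxk_mem.2 (h ▸ hxi_mem.2))
    have hjk : j ≠ k := fun h => hwu1 (uniq k w u₁ hxk_mem.2 (h ▸ hxj_mem.2))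
    have hlk : l ≠ k := fun h => hwu2 (uniq k w u₂ hxk_mem.2 (h ▸ hxl_mem.2))
    have hmk : m ≠ k := fun h => hwu2 (uniq k w u₂ hxk_mem.2 (h ▸ hxm_mem.2))
    have hil : i ≠ l := fun h => hu12 (uniq l u₁ u₂ (h ▸ hxi_mem.2) hxl_mem.2)
    have him : i ≠ m := fun h => hu12 (uniq m u₁ u₂ (h ▸ hxi_mem.2) hxm_mem.2)
    have hjl : j ≠ l := fun h => hu12 (uniq l u₁ u₂ (h ▸ hxj_mem.2) hxl_mem.2)
    have hjm : j ≠ m := fun h => hu12 (uniq m u₁ u₂ (h ▸ hxj_mem.2) hxm_mem.2)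
    have hij : i ≠ j := fun h => hxij (by rw [h])
    have hlm : l ≠ m := fun h => hxlm (by rw [h])
    have hcat : T.Cat5 i j k l m :=
      ⟨u₁, w, u₂, hxi_mem.2.symm, hxj_mem.2.symm, hAdj_w_u1.symm, hxk_mem.2.symm,
        hAdj_w_u2, hxl_mem.2.symm, hxm_mem.2.symm⟩
    exact normalize hij hik hil him hjk hjl hjm hlk.symm hmk.symm hlm hcat
  -- case on which internal vertex is the middle one
  have hple := hId_le p hpmem
  have hpge := hId_ge p hpmem
  have hqle := hId_le q hqmem
  have hqge := hId_ge q hqmem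
  have hrle := hId_le r hrmem
  have hrge := hId_ge r hrmem
  have hcases : ((LFᶜ.filter (T.G.Adj p)).card = 2 ∧ (LFᶜ.filter (T.G.Adj q)).card = 1
      ∧ (LFᶜ.filter (T.G.Adj r)).card = 1) ∨
      ((LFᶜ.filter (T.G.Adj q)).card = 2 ∧ (LFᶜ.filter (T.G.Adj p)).card = 1
      ∧ (LFᶜ.filter (T.G.Adj r)).card = 1) ∨
      ((LFᶜ.filter (T.G.Adj r)).card = 2 ∧ (LFᶜ.filter (T.G.Adj p)).card = 1
      ∧ (LFᶜ.filter (T.G.Adj q)).card = 1) := by omega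
  rcases hcases with ⟨h1, h2, h3⟩ | ⟨h1, h2, h3⟩ | ⟨h1, h2, h3⟩
  · exact build p q r hpq hpr hqr hIeq h1 h2 h3
  · refine build q p r hpq.symm hqr hpr ?_ h1 h2 h3
    rw [hIeq]; ext v; simp; tauto
  · refine build r p q hpr.symm hqr.symm hpq ?_ h1 h2 h3
    rw [hIeq]; ext v; simp; tauto

end SbenAux
namespace SbenAux
open SimpleGraph

lemma score_eq (T : PhyloTree (Fin 5)) [Fintype T.V] [DecidableEq T.V]
    {i j k l m : Fin 5} (hinj : Function.Injective ![i, j, k, l, m])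
    (ψ : Fin 8 ≃ T.V) (hadj : ∀ u v : Fin 8, T.G.Adj (ψ u) (ψ v) ↔ G0.Adj u v)
    (hι : ∀ t : Fin 5, ψ (ι0 t) = T.ι (![i, j, k, l, m] t)) (f : Fin 5 → Fin 2) :
    gScore T.G T.ι f = scr (f ∘ ![i, j, k, l, m]) := by
  have hAdj' : ∀ u v : T.V, T.G.Adj u v ↔ G0.Adj (ψ.symm u) (ψ.symm v) := by
    intro u v
    conv_lhs => rw [← ψ.apply_symm_apply u, ← ψ.apply_symm_apply v]
    exact hadj _ _
  rw [gScore_equiv ψ.symm T.G G0 hAdj' T.ι f]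
  have hsurj5 : Function.Surjective ![i, j, k, l, m] :=
    Finite.injective_iff_surjective.1 hinj
  have hval : ∀ t : Fin 5, ψ.symm (T.ι (![i, j, k, l, m] t)) = ι0 t := by
    intro t; rw [← hι t, Equiv.symm_apply_apply]
  rw [← gScore_G0 (f ∘ ![i, j, k, l, m])]
  apply gScore_reindex
  intro g
  constructor
  · intro h t
    have := h (![i, j, k, l, m] t)
    rwa [hval t] at this
  · intro h x
    obtain ⟨t, rfl⟩ := hsurj5 x
    rw [hval t]
    exact h t

lemma scoreA_eq (T : PhyloTree (Fin 5)) [Fintype T.V] [DecidableEq T.V]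
    {i j k l m : Fin 5} (hinj : Function.Injective ![i, j, k, l, m])
    (hcat : T.Cat5 i j k l m) : T.scoreA Sben = tot i j k l m := by
  obtain ⟨ψ, hadj, hι⟩ := determine T i j k l m hinj hcat
  show gScoreA T.G T.ι Sben = tot i j k l m
  unfold gScoreA tot
  rw [Sben'_eq]
  congr 1
  apply List.map_congr_left
  intro f _
  exact score_eq T hinj ψ hadj hι f

lemma iso_of_determined (T T' : PhyloTree (Fin 5)) {i j k l m : Fin 5}
    (hinj : Function.Injective ![i, j, k, l, m])
    (ψ : Fin 8 ≃ T.V) (ψ' : Fin 8 ≃ T'.V)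
    (hadj : ∀ u v : Fin 8, T.G.Adj (ψ u) (ψ v) ↔ G0.Adj u v)
    (hadj' : ∀ u v : Fin 8, T'.G.Adj (ψ' u) (ψ' v) ↔ G0.Adj u v)
    (hι : ∀ t : Fin 5, ψ (ι0 t) = T.ι (![i, j, k, l, m] t))
    (hι' : ∀ t : Fin 5, ψ' (ι0 t) = T'.ι (![i, j, k, l, m] t)) :
    PhyloIso T T' := by
  have hsurj5 : Function.Surjective ![i, j, k, l, m] :=
    Finite.injective_iff_surjective.1 hinj
  refine ⟨⟨ψ.symm.trans ψ', ?_⟩, ?_⟩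
  · intro u v
    show T'.G.Adj (ψ' (ψ.symm u)) (ψ' (ψ.symm v)) ↔ T.G.Adj u v
    rw [hadj' _ _]
    conv_rhs => rw [← ψ.apply_symm_apply u, ← ψ.apply_symm_apply v]
    exact (hadj _ _).symm
  · intro x
    obtain ⟨t, rfl⟩ := hsurj5 x
    show ψ' (ψ.symm (T.ι _)) = _
    rw [← hι t, Equiv.symm_apply_apply, hι' t]

end SbenAux

/-- For the above fifteen-character alignment `Sben` on five taxa over
`{A,C}`, the tree `T = ((1,3),2,(4,5))` is the unique MP tree. -/
theorem Sben_unique_MP (T : PhyloTree (Fin 5)) (hT : T.Cat5 0 2 1 3 4) :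
    T.IsUniqueMP Sben := by
  classical
  open SbenAux in
  haveI : Fintype T.V := @Fintype.ofFinite _ T.finV
  have hTinj : Function.Injective ![(0 : Fin 5), 2, 1, 3, 4] := by decide
  have hTscore : T.scoreA Sben = 23 := by
    rw [scoreA_eq T hTinj hT]; exact tot_T
  have key : ∀ T' : PhyloTree (Fin 5), T.scoreA Sben ≤ T'.scoreA Sben ∧
      (¬ PhyloIso T T' → T.scoreA Sben < T'.scoreA Sben) := by
    intro T'
    haveI : Fintype T'.V := @Fintype.ofFinite _ T'.finV
    haveI : DecidableRel T'.G.Adj := fun a b => Classical.dec _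
    obtain ⟨i, j, k, l, m, hinj, h1, h2, h3, hcat⟩ := structure5 T'
    have hne5 : ∀ s t : Fin 5, s ≠ t → ![i,j,k,l,m] s ≠ ![i,j,k,l,m] t :=
      fun s t h hh => h (hinj hh)
    have hdi : i ≠ j := hne5 0 1 (by decide)
    have hik : i ≠ k := hne5 0 2 (by decide)
    have hil : i ≠ l := hne5 0 3 (by decide)
    have him : i ≠ m := hne5 0 4 (by decide)
    have hjk : j ≠ k := hne5 1 2 (by decide)
    have hjl : j ≠ l := hne5 1 3 (by decide)
    have hjm : j ≠ m := hne5 1 4 (by decide)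
    have hkl : k ≠ l := hne5 2 3 (by decide)
    have hkm : k ≠ m := hne5 2 4 (by decide)
    have hlm : l ≠ m := hne5 3 4 (by decide)
    have hsc : T'.scoreA Sben = tot i j k l m := scoreA_eq T' hinj hcat
    rcases main_comb i j k l m hdi hik hil him hjk hjl hjm hkl hkm hlm h1 h2 h3 with
      h24 | ⟨h23, hi, hj, hk, hl, hm⟩
    · constructor
      · rw [hTscore, hsc]; omega
      · intro _; rw [hTscore, hsc]; omega
    · subst hi; subst hj; subst hk; subst hl; subst hm
      have hiso : PhyloIso T T' := by
        obtain ⟨ψ, hadj, hι⟩ := determine T 0 2 1 3 4 hTinj hT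
        obtain ⟨ψ', hadj', hι'⟩ := determine T' 0 2 1 3 4 hinj hcat
        exact iso_of_determined T T' hTinj ψ ψ' hadj hadj' hι hι'
      constructor
      · rw [hTscore, hsc, h23]
      · intro hn; exact absurd hiso hn
  exact ⟨fun T' => (key T').1, fun T' hn => (key T').2 hn⟩
end
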